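/- arXiv:2101.01966 — 3 statements merged into one kernel-verified Lean document; each statement's English description precedes it below -/
import Mathlib

section
/- Let (𝔙, 𝔙⁺) be a non-degenerate ordered 𝔉-bimodule with a local order unit 𝔢, and suppose 𝔙⁺ is Archimedean. Then for 𝔳 ∈ 𝔍ₙ𝔙𝔍ₙ and k > 0: (k𝔢ⁿ, k𝔢ⁿ)ₙ⁺ + saₙ(𝔳) ∈ 𝔙⁺ if and only if (k𝔢ⁿ, k𝔢ⁿ)ₙ⁺ − saₙ(𝔳) ∈ 𝔙⁺. -/
noncomputable section

open scoped Matrix.Norms.L2Operator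

/-! ### The *-algebra 𝔉 of ∞×∞ complex matrices with finitely many nonzero entries -/

/-- `∞ × ∞` complex matrices (indexed by `ℕ × ℕ`). -/
abbrev FMat := ℕ → ℕ → ℂ

/-- The matrix has (at most) finitely many nonzero entries: it is supported in some
`n × n` top-left block. -/
def IsFin (a : FMat) : Prop := ∃ n, ∀ i j, (n ≤ i ∨ n ≤ j) → a i j = 0

/-- Matrix multiplication in `𝔉` (the `tsum` is a finite sum for finitely supported
matrices). -/
def fmul (a b : FMat) : FMat := fun i k => ∑' j, a i j * b j k

/-- The involution (conjugate transpose) on `𝔉`. -/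
def fstar (a : FMat) : FMat := fun i j => starRingEnd ℂ (a j i)

/-- The matrix unit `𝔢_{i,j}`. -/
def eUnit (i j : ℕ) : FMat := fun k l => if k = i ∧ l = j then 1 else 0

/-- `𝔍ₙ = Σ_{i<n} 𝔢_{i,i}`, the partial identities. -/
def JMat (n : ℕ) : FMat := fun k l => if k = l ∧ k < n then 1 else 0

/-- `𝔎ₙ = Σ_{i<n} 𝔢_{i,n+i}`, used for `2×2`-block constructions. -/
def KMat (n : ℕ) : FMat := fun k l => if l = k + n ∧ k < n then 1 else 0

/-- The diagonal idempotent `Σ_{i ∈ s} 𝔢_{i,i}` associated to a finite set `s ⊂ ℕ`. -/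
def finsetDiag (s : Finset ℕ) : FMat := fun k l => if k = l ∧ k ∈ s then 1 else 0

/-- The operator norm on `𝔉`: the supremum of the (C*-algebra) operator norms of the
finite top-left blocks (for a finitely supported matrix the blocks stabilize). -/
def fnorm (a : FMat) : ℝ :=
  ⨆ n : ℕ, ‖(Matrix.of fun i j : Fin n => a i j : Matrix (Fin n) (Fin n) ℂ)‖

/-- The order `o(𝔞)` of a finitely supported matrix: the least `n` such that `𝔞` is
supported in the top-left `n × n` block. -/
def matOrd (a : FMat) : ℕ := sInf {n | ∀ i j, (n ≤ i ∨ n ≤ j) → a i j = 0}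

/-- A local unitary in `𝔉`: `𝔞*𝔞 = 𝔍_{o(𝔞)} = 𝔞𝔞*`. -/
def IsLocalUnitary (a : FMat) : Prop :=
  IsFin a ∧ fmul (fstar a) a = JMat (matOrd a) ∧ fmul a (fstar a) = JMat (matOrd a)

/-! ### Non-degenerate *-𝔉-bimodules -/

/-- A non-degenerate `*`-`𝔉`-bimodule structure on a complex vector space `V`:
left and right actions of (finitely supported) infinite matrices together with an
involution, compatible with each other and with the complex scalars, such that every
element is `𝔍ₙ·v·𝔍ₙ` for some `n`. -/
structure FBimod (V : Type*) [AddCommGroup V] [Module ℂ V] where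
  lsmul : FMat → V → V
  rsmul : V → FMat → V
  star : V → V
  lsmul_add : ∀ a u v, lsmul a (u + v) = lsmul a u + lsmul a v
  rsmul_add : ∀ u v b, rsmul (u + v) b = rsmul u b + rsmul v b
  add_lsmul : ∀ a b v, IsFin a → IsFin b → lsmul (a + b) v = lsmul a v + lsmul b v
  rsmul_add' : ∀ v a b, IsFin a → IsFin b → rsmul v (a + b) = rsmul v a + rsmul v b
  smul_lsmul : ∀ (c : ℂ) a v, IsFin a → lsmul (c • a) v = c • lsmul a v
  smul_rsmul : ∀ (c : ℂ) v a, IsFin a → rsmul v (c • a) = c • rsmul v a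
  mul_lsmul : ∀ a b v, IsFin a → IsFin b → lsmul (fmul a b) v = lsmul a (lsmul b v)
  rsmul_mul : ∀ v a b, IsFin a → IsFin b → rsmul v (fmul a b) = rsmul (rsmul v a) b
  lsmul_rsmul : ∀ a v b, IsFin a → IsFin b → rsmul (lsmul a v) b = lsmul a (rsmul v b)
  star_add : ∀ u v, star (u + v) = star u + star v
  star_star : ∀ v, star (star v) = v
  star_lsmul : ∀ a v, IsFin a → star (lsmul a v) = rsmul (star v) (fstar a)
  star_rsmul : ∀ v a, IsFin a → star (rsmul v a) = lsmul (fstar a) (star v)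
  smul_compat : ∀ (c : ℂ) (n : ℕ) v, lsmul (JMat n) (rsmul v (JMat n)) = v →
    lsmul (c • JMat n) v = c • v
  nondeg : ∀ v, ∃ n, lsmul (JMat n) (rsmul v (JMat n)) = v

namespace FBimod

variable {V : Type*} [AddCommGroup V] [Module ℂ V] (M : FBimod V)

/-- `𝔍ₙ 𝔳 𝔍ₙ`. -/
def cut (n : ℕ) (v : V) : V := M.lsmul (JMat n) (M.rsmul v (JMat n))

/-- The order `o(𝔳)`: the smallest `n` with `𝔍ₙ 𝔳 𝔍ₙ = 𝔳`. -/
def ord (v : V) : ℕ := sInf {n | M.cut n v = v}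

/-- `𝔞* 𝔳 𝔞`. -/
def conj (a : FMat) (v : V) : V := M.lsmul (fstar a) (M.rsmul v a)

/-- `C` is a bimodule cone: consists of self-adjoint elements, is closed under
addition and under `𝔳 ↦ 𝔞*𝔳𝔞` for `𝔞 ∈ 𝔉`. -/
def IsCone (C : Set V) : Prop :=
  (∀ v ∈ C, M.star v = v) ∧ (∀ u ∈ C, ∀ v ∈ C, u + v ∈ C) ∧
    (∀ v ∈ C, ∀ a : FMat, IsFin a → M.conj a v ∈ C)

/-- The cone `C` is proper: `C ∩ (−C) = {0}`. -/
def ConeProper (C : Set V) : Prop := ∀ v ∈ C, -v ∈ C → v = 0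

/-- The cone `C` is Archimedean. -/
def ConeArch (C : Set V) : Prop :=
  ∀ u ∈ C, ∀ v : V, M.star v = v → (∀ k : ℝ, 0 < k → (k : ℂ) • u + v ∈ C) → v ∈ C

/-- The cone `C` is generating. -/
def ConeGen (C : Set V) : Prop :=
  ∀ v : V, ∃ v₀ ∈ C, ∃ v₁ ∈ C, ∃ v₂ ∈ C, ∃ v₃ ∈ C,
    v = v₀ + Complex.I • v₁ - v₂ - Complex.I • v₃

/-- `(𝔳₁, 𝔳₂)ₙ⁺ = 𝔳₁ + 𝔎ₙ* 𝔳₂ 𝔎ₙ` (the diagonal `2×2`-block `diag(𝔳₁,𝔳₂)`). -/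
def pairPlus (n : ℕ) (v₁ v₂ : V) : V :=
  v₁ + M.lsmul (fstar (KMat n)) (M.rsmul v₂ (KMat n))

/-- `saₙ(𝔳) = 𝔍ₙ 𝔳 𝔎ₙ + 𝔎ₙ* 𝔳* 𝔍ₙ` (the off-diagonal `2×2`-block of `𝔳`). -/
def san (n : ℕ) (v : V) : V :=
  M.lsmul (JMat n) (M.rsmul v (KMat n)) +
    M.lsmul (fstar (KMat n)) (M.rsmul (M.star v) (JMat n))

/-- `𝔲` and `𝔳` are `𝔉`-independent: compressed onto disjoint diagonal blocks. -/
def FIndep (u v : V) : Prop :=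
  ∃ I J : Finset ℕ, Disjoint I J ∧
    M.lsmul (finsetDiag I) (M.rsmul u (finsetDiag I)) = u ∧
    M.lsmul (finsetDiag J) (M.rsmul v (finsetDiag J)) = v

/-- `(𝔙, C, abs)` is a non-degenerate absolutely ordered `𝔉`-bimodule
(Definition 18 of the paper). -/
structure IsAbsOrd (C : Set V) (abs : V → V) : Prop where
  cone : M.IsCone C
  abs_mem : ∀ v, abs v ∈ C
  ord_abs_le : ∀ v, M.ord (abs v) ≤ M.ord v
  abs_of_mem : ∀ v ∈ C, abs v = v
  pos_part : ∀ v, M.pairPlus (M.ord v) (abs (M.star v)) (abs v) + M.san (M.ord v) v ∈ C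
  abs_smul_le : ∀ (a b : FMat), IsFin a → IsFin b → ∀ v,
    (fnorm a : ℂ) • abs (M.rsmul (abs v) b) - abs (M.lsmul a (M.rsmul v b)) ∈ C
  indep_add : ∀ u v, M.FIndep u v → abs (u + v) = abs u + abs v
  absorb : ∀ u ∈ C, ∀ v ∈ C, ∀ w ∈ C, abs (u - v) = u + v → v - w ∈ C →
    abs (u - w) = u + w
  ortho_pm : ∀ u ∈ C, ∀ v ∈ C, ∀ w ∈ C, abs (u - v) = u + v → abs (u - w) = u + w →
    abs (u - abs (v + w)) = u + abs (v + w) ∧ abs (u - abs (v - w)) = u + abs (v - w)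

/-- `eⁿ = Σ_{i<n} 𝔢_{i,0} 𝔢 𝔢_{0,i}` for an element `𝔢` of order `1`. -/
def epow (e : V) (n : ℕ) : V :=
  ∑ i ∈ Finset.range n, M.lsmul (eUnit i 0) (M.rsmul e (eUnit 0 i))

/-- `𝔢` is a local order unit for `(𝔙, C)`. -/
def IsLocalOrderUnit (C : Set V) (e : V) : Prop :=
  e ∈ C ∧ M.cut 1 e = e ∧ ∀ v : V, M.cut 1 v = v → ∃ k : ℝ, 0 < k ∧
    M.pairPlus 1 ((k : ℂ) • e) ((k : ℂ) • e) + M.san 1 v ∈ C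

/-- `(𝔙, C, 𝔢)` is a local `𝔉`-order unit bimodule. -/
def IsLocalUnitBimod (C : Set V) (e : V) : Prop :=
  M.IsCone C ∧ ConeProper C ∧ M.ConeArch C ∧ M.IsLocalOrderUnit C e

/-- The norm associated to a local order unit:
`‖𝔳‖ = inf { k > 0 : (k𝔢^{o(𝔳)}, k𝔢^{o(𝔳)})⁺_{o(𝔳)} + sa_{o(𝔳)}(𝔳) ∈ C }`. -/
def lnorm (C : Set V) (e : V) (v : V) : ℝ :=
  sInf {k : ℝ | 0 < k ∧
    M.pairPlus (M.ord v) ((k : ℂ) • M.epow e (M.ord v)) ((k : ℂ) • M.epow e (M.ord v)) +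
      M.san (M.ord v) v ∈ C}

/-- `𝔲 ⊥_∞ 𝔳` with respect to the local-order-unit norm. -/
def PerpInf (C : Set V) (e : V) (u v : V) : Prop :=
  ∀ k₁ k₂ : ℝ, M.lnorm C e ((k₁ : ℂ) • u + (k₂ : ℂ) • v) =
    max (M.lnorm C e ((k₁ : ℂ) • u)) (M.lnorm C e ((k₂ : ℂ) • v))

end FBimod
/-! ### Matrices over a complex *-vector space -/

section MatrixLevel

variable {V : Type*} [AddCommGroup V] [Module ℂ V] [StarAddMonoid V] [StarModule ℂ V]

/-- Conjugate transpose of a rectangular matrix over a `*`-vector space. -/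
def mstar {m n : ℕ} (v : Matrix (Fin m) (Fin n) V) : Matrix (Fin n) (Fin m) V :=
  fun i j => star (v j i)

/-- Left action of a scalar matrix: `(a v)_{ij} = Σ_k a_{ik} v_{kj}`. -/
def aSmul {r m n : ℕ} (a : Matrix (Fin r) (Fin m) ℂ) (v : Matrix (Fin m) (Fin n) V) :
    Matrix (Fin r) (Fin n) V :=
  fun i j => ∑ k, a i k • v k j

/-- Right action of a scalar matrix: `(v b)_{ij} = Σ_k b_{kj} • v_{ik}`. -/
def smulB {m n s : ℕ} (v : Matrix (Fin m) (Fin n) V) (b : Matrix (Fin n) (Fin s) ℂ) :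
    Matrix (Fin m) (Fin s) V :=
  fun i j => ∑ k, b k j • v i k

/-- Direct sum (block diagonal) of rectangular matrices over `V`. -/
def dsum {m n r s : ℕ} (v : Matrix (Fin m) (Fin n) V) (w : Matrix (Fin r) (Fin s) V) :
    Matrix (Fin (m + r)) (Fin (n + s)) V :=
  fun i j =>
    if hi : (i : ℕ) < m then
      (if hj : (j : ℕ) < n then v ⟨i, hi⟩ ⟨j, hj⟩ else 0)
    else
      (if hj : (j : ℕ) < n then 0
       else w ⟨(i : ℕ) - m, by have := i.isLt; omega⟩ ⟨(j : ℕ) - n, by have := j.isLt; omega⟩)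

end MatrixLevel

/-- The L2-operator norm of a rectangular complex scalar matrix. -/
def cnorm {r m : ℕ} (a : Matrix (Fin r) (Fin m) ℂ) : ℝ := ‖a‖

/-- Embedding of a finite rectangular complex matrix into `𝔉`. -/
def embC {r m : ℕ} (a : Matrix (Fin r) (Fin m) ℂ) : FMat :=
  fun i j => if hi : i < r then (if hj : j < m then a ⟨i, hi⟩ ⟨j, hj⟩ else 0) else 0

/-- `e ⊕ ⋯ ⊕ e`: the diagonal matrix with constant diagonal `e`. -/
def diagE {V : Type*} [AddCommGroup V] (e : V) (n : ℕ) : Matrix (Fin n) (Fin n) V :=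
  Matrix.of fun i j => if i = j then e else 0

/-! ### Absolutely matrix ordered spaces and absolute matrix order unit spaces -/

/-- An absolutely matrix ordered space structure on a complex `*`-vector space `V`:
matrix cones `Mₙ(V)⁺` and absolute values `|·|_{m,n} : M_{m,n}(V) → Mₙ(V)⁺`
(Definition 4.1 of Karn-Kumar). -/
structure AMOS (V : Type*) [AddCommGroup V] [Module ℂ V] [StarAddMonoid V]
    [StarModule ℂ V] where
  pos : ∀ n : ℕ, Set (Matrix (Fin n) (Fin n) V)
  abs : ∀ m n : ℕ, Matrix (Fin m) (Fin n) V → Matrix (Fin n) (Fin n) V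
  pos_star : ∀ n, ∀ v ∈ pos n, mstar v = v
  pos_add : ∀ n, ∀ u ∈ pos n, ∀ v ∈ pos n, u + v ∈ pos n
  pos_conj : ∀ m n (a : Matrix (Fin n) (Fin m) ℂ), ∀ v ∈ pos n,
    aSmul a.conjTranspose (smulB v a) ∈ pos m
  abs_mem : ∀ m n v, abs m n v ∈ pos n
  abs_of_pos : ∀ n, ∀ v ∈ pos n, abs n n v = v
  abs_add_self : ∀ n (v : Matrix (Fin n) (Fin n) V), mstar v = v →
    abs n n v + v ∈ pos n ∧ abs n n v - v ∈ pos n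
  abs_real_smul : ∀ n (k : ℝ) (v : Matrix (Fin n) (Fin n) V), mstar v = v →
    abs n n ((k : ℂ) • v) = ((|k| : ℝ) : ℂ) • abs n n v
  absorb : ∀ n, ∀ u ∈ pos n, ∀ v ∈ pos n, ∀ w ∈ pos n,
    abs n n (u - v) = u + v → v - w ∈ pos n → abs n n (u - w) = u + w
  ortho_pm : ∀ n, ∀ u ∈ pos n, ∀ v ∈ pos n, ∀ w ∈ pos n,
    abs n n (u - v) = u + v → abs n n (u - w) = u + w →
    abs n n (u - abs n n (v + w)) = u + abs n n (v + w) ∧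
      abs n n (u - abs n n (v - w)) = u + abs n n (v - w)
  abs_smul_le : ∀ (r m n s : ℕ) (α : Matrix (Fin r) (Fin m) ℂ)
    (v : Matrix (Fin m) (Fin n) V) (β : Matrix (Fin n) (Fin s) ℂ),
    (cnorm α : ℂ) • abs n s (smulB (abs m n v) β) - abs r s (aSmul α (smulB v β)) ∈ pos s
  abs_dsum : ∀ (m n r s : ℕ) (v : Matrix (Fin m) (Fin n) V) (w : Matrix (Fin r) (Fin s) V),
    abs (m + r) (n + s) (dsum v w) = dsum (abs m n v) (abs r s w)

/-- A matrix order unit structure on top of an absolutely matrix ordered space: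
an order unit `e` with `V⁺` proper and each `Mₙ(V)⁺` Archimedean. -/
structure AMOUS (V : Type*) [AddCommGroup V] [Module ℂ V] [StarAddMonoid V]
    [StarModule ℂ V] extends AMOS V where
  e : V
  e_pos : diagE e 1 ∈ pos 1
  proper : ∀ v ∈ pos 1, -v ∈ pos 1 → v = 0
  arch : ∀ n (v : Matrix (Fin n) (Fin n) V), mstar v = v →
    (∀ k : ℝ, 0 < k → (k : ℂ) • diagE e n + v ∈ pos n) →
    v ∈ pos n
  unit : ∀ n (v : Matrix (Fin n) (Fin n) V), mstar v = v →
    ∃ k : ℝ, 0 < k ∧ (k : ℂ) • diagE e n - v ∈ pos n ∧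
      (k : ℂ) • diagE e n + v ∈ pos n

namespace AMOUS

variable {V : Type*} [AddCommGroup V] [Module ℂ V] [StarAddMonoid V] [StarModule ℂ V]
variable (A : AMOUS V)

/-- `eⁿ = e ⊕ ⋯ ⊕ e ∈ Mₙ(V)`. -/
def eN (n : ℕ) : Matrix (Fin n) (Fin n) V := diagE A.e n

/-- The `2n × 2n` matrix `[[a, b], [c, d]]` of `n × n` blocks. -/
def block2 {n : ℕ} (a b c d : Matrix (Fin n) (Fin n) V) :
    Matrix (Fin (n + n)) (Fin (n + n)) V :=
  fun i j =>
    if hi : (i : ℕ) < n then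
      (if hj : (j : ℕ) < n then a ⟨i, hi⟩ ⟨j, hj⟩
       else b ⟨i, hi⟩ ⟨(j : ℕ) - n, by have := j.isLt; omega⟩)
    else
      (if hj : (j : ℕ) < n then c ⟨(i : ℕ) - n, by have := i.isLt; omega⟩ ⟨j, hj⟩
       else d ⟨(i : ℕ) - n, by have := i.isLt; omega⟩ ⟨(j : ℕ) - n, by have := j.isLt; omega⟩)

end AMOUS
namespace AMOUS

variable {V : Type*} [AddCommGroup V] [Module ℂ V] [StarAddMonoid V] [StarModule ℂ V]
variable (A : AMOUS V)

/-- The matrix norms of a matrix order unit space: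
`‖v‖ₙ = inf { k > 0 : [[k eⁿ, v], [v*, k eⁿ]] ∈ M₂ₙ(V)⁺ }`. -/
def mnorm (n : ℕ) (v : Matrix (Fin n) (Fin n) V) : ℝ :=
  sInf {k : ℝ | 0 < k ∧
    block2 ((k : ℂ) • A.eN n) v (mstar v) ((k : ℂ) • A.eN n) ∈ A.pos (n + n)}

/-- Orthogonality `u ⊥ v` (for positive elements): `|u − v| = u + v`. -/
def Perp {n : ℕ} (u v : Matrix (Fin n) (Fin n) V) : Prop :=
  A.abs n n (u - v) = u + v

/-- `u ⊥_∞ v`: `‖k₁ u + k₂ v‖ = max {‖k₁ u‖, ‖k₂ v‖}` for all real `k₁, k₂`. -/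
def PerpInfM {n : ℕ} (u v : Matrix (Fin n) (Fin n) V) : Prop :=
  ∀ k₁ k₂ : ℝ, A.mnorm n ((k₁ : ℂ) • u + (k₂ : ℂ) • v) =
    max (A.mnorm n ((k₁ : ℂ) • u)) (A.mnorm n ((k₂ : ℂ) • v))

/-- `u ⊥_∞^a v`: absolute `∞`-orthogonality. -/
def PerpInfA {n : ℕ} (u v : Matrix (Fin n) (Fin n) V) : Prop :=
  ∀ u₁ ∈ A.pos n, ∀ v₁ ∈ A.pos n, u - u₁ ∈ A.pos n → v - v₁ ∈ A.pos n → A.PerpInfM u₁ v₁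

/-- `(V, {Mₙ(V)⁺}, {|·|}, e)` is an absolute matrix order unit space:
`⊥ = ⊥_∞^a` on each `Mₙ(V)⁺`. -/
def IsAbsolute : Prop :=
  ∀ n, ∀ u ∈ A.pos n, ∀ v ∈ A.pos n, (A.Perp u v ↔ A.PerpInfA u v)

/-- `p` is an order projection in `Mₙ(V)`: `p* = p` and `|2p − eⁿ| = eⁿ`. -/
def IsOP (n : ℕ) (p : Matrix (Fin n) (Fin n) V) : Prop :=
  mstar p = p ∧ A.abs n n ((2 : ℂ) • p - A.eN n) = A.eN n

/-- `v ∈ M_{m,n}(V)` is a partial isometry: `|v|` and `|v*|` are order projections. -/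
def IsPI {m n : ℕ} (v : Matrix (Fin m) (Fin n) V) : Prop :=
  A.IsOP n (A.abs m n v) ∧ A.IsOP m (A.abs n m (mstar v))

end AMOUS

/-- An element of `M_∞(V)`: a matrix at some level `n`. -/
def OPE (V : Type*) : Type _ := Σ n : ℕ, Matrix (Fin n) (Fin n) V

namespace OPE

variable {V : Type*} [AddCommGroup V] [Module ℂ V] [StarAddMonoid V] [StarModule ℂ V]

/-- Direct sum in `M_∞(V)`. -/
def d (p q : OPE V) : OPE V := ⟨p.1 + q.1, dsum p.2 q.2⟩

/-- The zero order projection (at level 1). -/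
def zero (V : Type*) [AddCommGroup V] : OPE V := ⟨1, 0⟩

end OPE

namespace AMOUS

variable {V : Type*} [AddCommGroup V] [Module ℂ V] [StarAddMonoid V] [StarModule ℂ V]
variable (A : AMOUS V)

/-- Membership in `𝒪𝒫_∞(V)`. -/
def IsOPE (p : OPE V) : Prop := A.IsOP p.1 p.2

/-- `eⁿ` as an element of `𝒪𝒫_∞(V)`. -/
def eOPE (n : ℕ) : OPE V := ⟨n, A.eN n⟩

/-- Partial isometric equivalence `p ∼ q` of order projections: there is a partial
isometry `v` with `p = |v*|` and `q = |v|`. -/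
def Sim (p q : OPE V) : Prop :=
  ∃ v : Matrix (Fin p.1) (Fin q.1) V,
    A.IsPI v ∧ p.2 = A.abs q.1 p.1 (mstar v) ∧ q.2 = A.abs p.1 q.1 v

/-- Condition (T). -/
def CondT : Prop :=
  ∀ (m n l : ℕ) (u : Matrix (Fin m) (Fin n) V) (v : Matrix (Fin l) (Fin n) V),
    A.IsPI u → A.IsPI v → A.abs m n u = A.abs l n v →
    ∃ w : Matrix (Fin m) (Fin l) V, A.IsPI w ∧
      A.abs l m (mstar w) = A.abs n m (mstar u) ∧ A.abs m l w = A.abs n l (mstar v)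

/-- Stabilized equivalence `p ≈ q`: `p ⊕ r ∼ q ⊕ r` for some order projection `r`. -/
def ASim (p q : OPE V) : Prop := ∃ r : OPE V, A.IsOPE r ∧ A.Sim (p.d r) (q.d r)

/-- A pair of order projections, representing an element `[(p,q)]` of `K₀(V)`. -/
def IsOPPair (x : OPE V × OPE V) : Prop := A.IsOPE x.1 ∧ A.IsOPE x.2

/-- The relation `(p₁,q₁) ≡ (p₂,q₂) ↔ p₁ ⊕ q₂ ≈ p₂ ⊕ q₁` defining `K₀(V)`. -/
def Krel (x y : OPE V × OPE V) : Prop := A.ASim (x.1.d y.2) (y.1.d x.2)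

/-- Addition of representatives of `K₀(V)` classes. -/
def kadd (x y : OPE V × OPE V) : OPE V × OPE V := (x.1.d y.1, x.2.d y.2)

/-- The representative of the zero class of `K₀(V)`. -/
def kzero : OPE V × OPE V := (OPE.zero V, OPE.zero V)

/-- Representative-level membership in the cone `K₀(V)⁺ = {[(p,0)] : p ∈ 𝒪𝒫_∞(V)}`. -/
def KPos (x : OPE V × OPE V) : Prop :=
  ∃ p : OPE V, A.IsOPE p ∧ A.Krel x (p, OPE.zero V)

/-- Representative-level order `[x] ≤ [y]` in `K₀(V)`: `[y] − [x] ∈ K₀(V)⁺`. -/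
def Kle (x y : OPE V × OPE V) : Prop :=
  ∃ r : OPE V, A.IsOPE r ∧ A.Krel (kadd x (r, OPE.zero V)) y

/-- The order projection `p ∈ Mₙ(V)` is finite: `q ∼ p` and `q ≥ p` imply `q = p`. -/
def FiniteOP (n : ℕ) (p : Matrix (Fin n) (Fin n) V) : Prop :=
  ∀ q : Matrix (Fin n) (Fin n) V, A.IsOP n q → A.Sim ⟨n, q⟩ ⟨n, p⟩ →
    q - p ∈ A.pos n → q = p

end AMOUS

/-! ### Maps between absolute matrix order unit spaces -/

section Maps

variable {V W : Type*} [AddCommGroup V] [Module ℂ V] [StarAddMonoid V] [StarModule ℂ V]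
  [AddCommGroup W] [Module ℂ W] [StarAddMonoid W] [StarModule ℂ W]

/-- The amplification `φₙ` (entrywise application) of a map. -/
def mmap (φ : V →ₗ[ℂ] W) {m n : ℕ} (v : Matrix (Fin m) (Fin n) V) :
    Matrix (Fin m) (Fin n) W :=
  fun i j => φ (v i j)

/-- `φ` is completely `|·|`-preserving: every amplification `φₙ` is `|·|`-preserving. -/
def CAbsPres (A : AMOUS V) (B : AMOUS W) (φ : V →ₗ[ℂ] W) : Prop :=
  ∀ (n : ℕ) (v : Matrix (Fin n) (Fin n) V), B.abs n n (mmap φ v) = mmap φ (A.abs n n v)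

/-- `φ` and `ψ` are completely orthogonal: `φₙ(u) ⊥ ψₙ(v)` for all positive `u, v`. -/
def COrth (A : AMOUS V) (B : AMOUS W) (φ ψ : V →ₗ[ℂ] W) : Prop :=
  ∀ (n : ℕ) (u v : Matrix (Fin n) (Fin n) V), u ∈ A.pos n → v ∈ A.pos n →
    B.Perp (mmap φ u) (mmap ψ v)

/-- The image of an element of `M_∞(V)` under (the amplifications of) `φ`. -/
def mmapOPE (φ : V →ₗ[ℂ] W) (p : OPE V) : OPE W := ⟨p.1, mmap φ p.2⟩

/-- `F` represents a group homomorphism `K₀(V) → K₀(W)` making the `K₀` diagram of `φ`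
commute: it maps `K₀`-representatives to `K₀`-representatives, respects the defining
relation `≡`, is additive, and satisfies `F([(p, 0)]) = [(φ(p), 0)]`. -/
def K0HomProp (A : AMOUS V) (B : AMOUS W) (φ : V →ₗ[ℂ] W)
    (F : OPE V × OPE V → OPE W × OPE W) : Prop :=
  (∀ x, A.IsOPPair x → B.IsOPPair (F x)) ∧
  (∀ x y, A.IsOPPair x → A.IsOPPair y → A.Krel x y → B.Krel (F x) (F y)) ∧
  (∀ x y, A.IsOPPair x → A.IsOPPair y → B.Krel (F (AMOUS.kadd x y)) (AMOUS.kadd (F x) (F y))) ∧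
  (∀ p : OPE V, A.IsOPE p → B.Krel (F (p, OPE.zero V)) (mmapOPE φ p, OPE.zero W))

/-- The completely bounded norm of `φ` with respect to the order unit matrix norms. -/
def cbNorm (A : AMOUS V) (B : AMOUS W) (φ : V →ₗ[ℂ] W) : ℝ :=
  ⨆ n : ℕ, sInf {c : ℝ | 0 ≤ c ∧
    ∀ v : Matrix (Fin n) (Fin n) V, B.mnorm n (mmap φ v) ≤ c * A.mnorm n v}

end Maps


/-! ### Auxiliary lemmas for Statement 7 -/

lemma fmul_eq_single (a b : FMat) (p q j0 : ℕ)
    (h : ∀ j, j ≠ j0 → a p j * b j q = 0) : fmul a b p q = a p j0 * b j0 q :=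
  tsum_eq_single j0 h

/-- The sign matrix `diag(1,…,1,−1,…,−1)` (n ones, then n minus-ones). -/
def dmat (n : ℕ) : FMat :=
  fun k l => if k = l then (if k < n then 1 else if k < n + n then -1 else 0) else 0

lemma dmat_offdiag {n p q : ℕ} (h : p ≠ q) : dmat n p q = 0 := by
  simp [dmat, h]

lemma dmat_diag_lt {n i : ℕ} (h : i < n) : dmat n i i = 1 := by
  simp [dmat, h]

lemma JMat_offdiag {n p q : ℕ} (h : p ≠ q) : JMat n p q = 0 := by simp [JMat, h]

lemma JMat_diag_lt {n i : ℕ} (h : i < n) : JMat n i i = 1 := by simp [JMat, h]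

lemma fstar_dmat (n : ℕ) : fstar (dmat n) = dmat n := by
  funext i j
  rcases eq_or_ne i j with rfl | h
  · simp only [fstar, dmat, if_pos rfl]
    split_ifs <;> simp
  · simp [fstar, dmat_offdiag (Ne.symm h), dmat_offdiag h]

lemma fstar_JMat (n : ℕ) : fstar (JMat n) = JMat n := by
  funext i j
  rcases eq_or_ne i j with rfl | h
  · simp only [fstar, JMat]
    split_ifs <;> simp
  · simp [fstar, JMat_offdiag (Ne.symm h), JMat_offdiag h]

lemma fmul_dmat_JMat (n : ℕ) : fmul (dmat n) (JMat n) = JMat n := by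
  funext p q
  rw [fmul_eq_single _ _ p q p (fun j hj => by rw [dmat_offdiag (Ne.symm hj), zero_mul])]
  by_cases h : p = q ∧ p < n
  · rw [dmat_diag_lt h.2]; simp [JMat, h]
  · simp only [JMat]; rw [if_neg h, mul_zero]

lemma fmul_JMat_dmat (n : ℕ) : fmul (JMat n) (dmat n) = JMat n := by
  funext p q
  rw [fmul_eq_single _ _ p q q (fun j hj => by rw [dmat_offdiag hj, mul_zero])]
  by_cases h : p = q ∧ p < n
  · obtain ⟨rfl, h2⟩ := h
    rw [dmat_diag_lt h2]; simp
  · simp only [JMat]; rw [if_neg h, zero_mul]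

lemma fmul_KMat_dmat (n : ℕ) : fmul (KMat n) (dmat n) = (-1 : ℂ) • KMat n := by
  funext p q
  rw [fmul_eq_single _ _ p q q (fun j hj => by rw [dmat_offdiag hj, mul_zero])]
  simp only [Pi.smul_apply, smul_eq_mul]
  by_cases h : q = p + n ∧ p < n
  · obtain ⟨rfl, h2⟩ := h
    have h3 : ¬ p + n < n := by omega
    have h4 : p + n < n + n := by omega
    simp [KMat, dmat, h2, h3, h4]
  · have h0 : KMat n p q = 0 := by simp only [KMat]; rw [if_neg h]
    rw [h0, zero_mul, mul_zero]

lemma fmul_dmat_fstarK (n : ℕ) :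
    fmul (dmat n) (fstar (KMat n)) = (-1 : ℂ) • fstar (KMat n) := by
  funext p q
  rw [fmul_eq_single _ _ p q p (fun j hj => by rw [dmat_offdiag (Ne.symm hj), zero_mul])]
  simp only [Pi.smul_apply, smul_eq_mul]
  by_cases h : p = q + n ∧ q < n
  · obtain ⟨rfl, h2⟩ := h
    have h3 : ¬ q + n < n := by omega
    have h4 : q + n < n + n := by omega
    simp [fstar, KMat, dmat, h2, h3, h4]
  · have h0 : fstar (KMat n) p q = 0 := by
      simp only [fstar, KMat]; rw [if_neg h, map_zero]
    rw [h0, mul_zero, mul_zero]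

lemma fmul_smul_left (c : ℂ) (a b : FMat) : fmul (c • a) b = c • fmul a b := by
  funext p q
  simp only [fmul, Pi.smul_apply, smul_eq_mul, mul_assoc]
  exact tsum_mul_left

lemma fmul_smul_right (c : ℂ) (a b : FMat) : fmul a (c • b) = c • fmul a b := by
  funext p q
  simp only [fmul, Pi.smul_apply, smul_eq_mul]
  rw [← tsum_mul_left]
  congr 1; funext j; ring

lemma fmul_diag_eUnit {d : FMat} (hd : ∀ p q, p ≠ q → d p q = 0) {i : ℕ}
    (h1 : d i i = 1) (j : ℕ) : fmul d (eUnit i j) = eUnit i j := by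
  funext p q
  rw [fmul_eq_single _ _ p q p (fun l hl => by rw [hd p l (Ne.symm hl), zero_mul])]
  by_cases h : p = i ∧ q = j
  · obtain ⟨rfl, rfl⟩ := h
    rw [h1, one_mul]
  · have h0 : eUnit i j p q = 0 := by simp only [eUnit]; rw [if_neg h]
    rw [h0, mul_zero]

lemma fmul_eUnit_diag {d : FMat} (hd : ∀ p q, p ≠ q → d p q = 0) {j : ℕ}
    (h1 : d j j = 1) (i : ℕ) : fmul (eUnit i j) d = eUnit i j := by
  funext p q
  rw [fmul_eq_single _ _ p q q (fun l hl => by rw [hd l q hl, mul_zero])]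
  by_cases h : p = i ∧ q = j
  · obtain ⟨rfl, rfl⟩ := h
    rw [h1, mul_one]
  · have h0 : eUnit i j p q = 0 := by simp only [eUnit]; rw [if_neg h]
    rw [h0, zero_mul]

lemma isFin_JMat (n : ℕ) : IsFin (JMat n) :=
  ⟨n, fun i j h => by
    simp only [JMat]; rw [if_neg]; rintro ⟨rfl, h2⟩; omega⟩

lemma isFin_KMat (n : ℕ) : IsFin (KMat n) :=
  ⟨n + n, fun i j h => by
    simp only [KMat]; rw [if_neg]; rintro ⟨rfl, h2⟩; omega⟩

lemma isFin_dmat (n : ℕ) : IsFin (dmat n) :=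
  ⟨n + n, fun i j h => by
    simp only [dmat]
    split_ifs with h1 h2 h3
    · exfalso; omega
    · exfalso; omega
    · rfl
    · rfl⟩

lemma isFin_eUnit (i j : ℕ) : IsFin (eUnit i j) :=
  ⟨i + j + 1, fun p q h => by
    simp only [eUnit]; rw [if_neg]; rintro ⟨rfl, rfl⟩; omega⟩

lemma isFin_fstar {a : FMat} (h : IsFin a) : IsFin (fstar a) := by
  obtain ⟨n, hn⟩ := h
  exact ⟨n, fun i j hij => by simp [fstar, hn j i hij.symm]⟩

lemma isFin_smul (c : ℂ) {a : FMat} (h : IsFin a) : IsFin (c • a) := by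
  obtain ⟨n, hn⟩ := h
  exact ⟨n, fun i j hij => by simp [hn i j hij]⟩

namespace FBimod

variable {V : Type*} [AddCommGroup V] [Module ℂ V] (M : FBimod V)

/-- `lsmul a` as an additive monoid homomorphism. -/
def lhom (a : FMat) : V →+ V := AddMonoidHom.mk' (M.lsmul a) (M.lsmul_add a)

/-- `rsmul · a` as an additive monoid homomorphism. -/
def rhom (a : FMat) : V →+ V :=
  AddMonoidHom.mk' (fun v => M.rsmul v a) (fun u v => M.rsmul_add u v a)

@[simp] lemma lhom_apply (a : FMat) (v : V) : M.lhom a v = M.lsmul a v := rfl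
@[simp] lemma rhom_apply (a : FMat) (v : V) : M.rhom a v = M.rsmul v a := rfl

lemma lsmul_neg (a : FMat) (v : V) : M.lsmul a (-v) = - M.lsmul a v :=
  (M.lhom a).map_neg v

lemma conj_def (a : FMat) (v : V) :
    M.conj a v = M.lsmul (fstar a) (M.rsmul v a) := rfl

lemma conj_add (a : FMat) (u v : V) :
    M.conj a (u + v) = M.conj a u + M.conj a v :=
  ((M.lhom (fstar a)).comp (M.rhom a)).map_add u v

lemma conj_neg (a : FMat) (v : V) : M.conj a (-v) = - M.conj a v :=
  ((M.lhom (fstar a)).comp (M.rhom a)).map_neg v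

lemma conj_sub (a : FMat) (u v : V) :
    M.conj a (u - v) = M.conj a u - M.conj a v :=
  ((M.lhom (fstar a)).comp (M.rhom a)).map_sub u v

lemma conj_sum (a : FMat) {ι : Type*} (s : Finset ι) (f : ι → V) :
    M.conj a (∑ i ∈ s, f i) = ∑ i ∈ s, M.conj a (f i) :=
  map_sum ((M.lhom (fstar a)).comp (M.rhom a)) f s

/-- `a* (b v c) a = (a* b) v (c a)`. -/
lemma conj_lLr (a b c : FMat) (hb : IsFin b) (hc : IsFin c) (ha : IsFin a) (v : V) :
    M.conj a (M.lsmul b (M.rsmul v c)) =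
      M.lsmul (fmul (fstar a) b) (M.rsmul v (fmul c a)) := by
  rw [M.conj_def, M.lsmul_rsmul b _ a hb ha, ← M.rsmul_mul v c a hc ha,
    ← M.mul_lsmul (fstar a) b _ (isFin_fstar ha) hb]

lemma conj_san_dmat (n : ℕ) (w : V) :
    M.conj (dmat n) (M.san n w) = - M.san n w := by
  rw [FBimod.san, M.conj_add]
  rw [M.conj_lLr _ _ _ (isFin_JMat n) (isFin_KMat n) (isFin_dmat n)]
  rw [M.conj_lLr _ _ _ (isFin_fstar (isFin_KMat n)) (isFin_JMat n) (isFin_dmat n)]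
  rw [fstar_dmat, fmul_dmat_JMat, fmul_KMat_dmat, fmul_dmat_fstarK, fmul_JMat_dmat]
  rw [M.smul_rsmul _ _ _ (isFin_KMat n),
    M.smul_lsmul _ _ _ (isFin_fstar (isFin_KMat n))]
  rw [neg_one_smul, neg_one_smul, M.lsmul_neg, neg_add]

lemma conj_JMat_epow (e : V) (n : ℕ) : M.conj (JMat n) (M.epow e n) = M.epow e n := by
  rw [FBimod.epow, M.conj_sum]
  refine Finset.sum_congr rfl fun i hi => ?_
  have hi' := Finset.mem_range.mp hi
  rw [M.conj_lLr _ _ _ (isFin_eUnit i 0) (isFin_eUnit 0 i) (isFin_JMat n), fstar_JMat,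
    fmul_diag_eUnit (fun p q h => JMat_offdiag h) (JMat_diag_lt hi') 0,
    fmul_eUnit_diag (fun p q h => JMat_offdiag h) (JMat_diag_lt hi') 0]

lemma conj_dmat_epow (e : V) (n : ℕ) : M.conj (dmat n) (M.epow e n) = M.epow e n := by
  rw [FBimod.epow, M.conj_sum]
  refine Finset.sum_congr rfl fun i hi => ?_
  have hi' := Finset.mem_range.mp hi
  rw [M.conj_lLr _ _ _ (isFin_eUnit i 0) (isFin_eUnit 0 i) (isFin_dmat n), fstar_dmat,
    fmul_diag_eUnit (fun p q h => dmat_offdiag h) (dmat_diag_lt hi') 0,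
    fmul_eUnit_diag (fun p q h => dmat_offdiag h) (dmat_diag_lt hi') 0]

lemma conj_dmat_smul_epow (e : V) (n : ℕ) (k : ℂ) :
    M.conj (dmat n) (k • M.epow e n) = k • M.epow e n := by
  have hcut : M.lsmul (JMat n) (M.rsmul (M.epow e n) (JMat n)) = M.epow e n := by
    have h := M.conj_JMat_epow e n
    rwa [M.conj_def, fstar_JMat] at h
  have hsc := M.smul_compat k n (M.epow e n) hcut
  rw [← hsc, M.conj_def, fstar_dmat]
  rw [M.lsmul_rsmul _ _ _ (isFin_smul k (isFin_JMat n)) (isFin_dmat n)]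
  rw [← M.mul_lsmul _ _ _ (isFin_dmat n) (isFin_smul k (isFin_JMat n))]
  rw [fmul_smul_right, fmul_dmat_JMat]
  have hJ : (k • JMat n) = fmul (k • JMat n) (dmat n) := by
    rw [fmul_smul_left, fmul_JMat_dmat]
  conv_lhs => rw [hJ]
  rw [M.mul_lsmul _ _ _ (isFin_smul k (isFin_JMat n)) (isFin_dmat n)]
  have h2 : M.lsmul (dmat n) (M.rsmul (M.epow e n) (dmat n)) = M.epow e n := by
    have h := M.conj_dmat_epow e n
    rwa [M.conj_def, fstar_dmat] at h
  rw [h2]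

lemma conj_pairPlus_dmat (n : ℕ) (v₁ v₂ : V) (h1 : M.conj (dmat n) v₁ = v₁) :
    M.conj (dmat n) (M.pairPlus n v₁ v₂) = M.pairPlus n v₁ v₂ := by
  rw [FBimod.pairPlus, M.conj_add, h1]
  congr 1
  rw [M.conj_lLr _ _ _ (isFin_fstar (isFin_KMat n)) (isFin_KMat n) (isFin_dmat n),
    fstar_dmat, fmul_dmat_fstarK, fmul_KMat_dmat,
    M.smul_rsmul _ _ _ (isFin_KMat n),
    M.smul_lsmul _ _ _ (isFin_fstar (isFin_KMat n)),
    neg_one_smul, neg_one_smul, M.lsmul_neg, neg_neg]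

end FBimod

/-- In a non-degenerate ordered `𝔉`-bimodule with a local order unit
`𝔢` and Archimedean cone, for `𝔳 ∈ 𝔍ₙ𝔙𝔍ₙ` and `k > 0`:
`(k𝔢ⁿ, k𝔢ⁿ)ₙ⁺ + saₙ(𝔳) ∈ 𝔙⁺ ↔ (k𝔢ⁿ, k𝔢ⁿ)ₙ⁺ − saₙ(𝔳) ∈ 𝔙⁺`. -/
theorem statement7 {V : Type*} [AddCommGroup V] [Module ℂ V] (M : FBimod V) (C : Set V)
    (e : V) (hC : M.IsCone C) (hunit : M.IsLocalOrderUnit C e) (harch : M.ConeArch C)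
    (n : ℕ) (v : V) (hv : M.cut n v = v) (k : ℝ) (hk : 0 < k) :
    M.pairPlus n ((k : ℂ) • M.epow e n) ((k : ℂ) • M.epow e n) + M.san n v ∈ C ↔
      M.pairPlus n ((k : ℂ) • M.epow e n) ((k : ℂ) • M.epow e n) - M.san n v ∈ C := by
  have hfa := isFin_dmat n
  have h1 := M.conj_dmat_smul_epow e n (k : ℂ)
  constructor
  · intro h
    have hc := hC.2.2 _ h (dmat n) hfa
    rwa [M.conj_add, M.conj_pairPlus_dmat n _ _ h1, M.conj_san_dmat n v,
      ← sub_eq_add_neg] at hc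
  · intro h
    have hc := hC.2.2 _ h (dmat n) hfa
    rwa [M.conj_sub, M.conj_pairPlus_dmat n _ _ h1, M.conj_san_dmat n v,
      sub_neg_eq_add] at hc
end
end

section
/- Let (𝔙, 𝔙⁺, 𝔢) be a local 𝔉-order unit bimodule with associated norm ‖·‖, and let 𝔲, 𝔳 ∈ 𝔙⁺ with ‖𝔲‖ = ‖𝔳‖ = 1. Then 𝔲 ⊥_∞ 𝔳 if and only if ‖𝔲 + 𝔳‖ = 1. -/
noncomputable section

open scoped Matrix.Norms.L2Operator

namespace Stmt9Aux

/-! #### IsFin lemmas -/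

lemma isFin_zero : IsFin (0 : FMat) := ⟨0, fun _ _ _ => rfl⟩

lemma isFin_J (n : ℕ) : IsFin (JMat n) := by
  refine ⟨n, fun i j h => ?_⟩
  simp only [JMat, ite_eq_right_iff]
  rintro ⟨rfl, h2⟩; omega

lemma isFin_K (n : ℕ) : IsFin (KMat n) := by
  refine ⟨n + n, fun i j h => ?_⟩
  simp only [KMat, ite_eq_right_iff]
  rintro ⟨rfl, h2⟩; omega

lemma isFin_fstar {a : FMat} (ha : IsFin a) : IsFin (fstar a) := by
  obtain ⟨n, hn⟩ := ha
  exact ⟨n, fun i j h => by simp [fstar, hn j i h.symm]⟩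

lemma isFin_add {a b : FMat} (ha : IsFin a) (hb : IsFin b) : IsFin (a + b) := by
  obtain ⟨n, hn⟩ := ha; obtain ⟨m, hm⟩ := hb
  refine ⟨max n m, fun i j h => ?_⟩
  have h1 : (n ≤ i ∨ n ≤ j) := by omega
  have h2 : (m ≤ i ∨ m ≤ j) := by omega
  show a i j + b i j = 0
  rw [hn i j h1, hm i j h2, add_zero]

lemma isFin_smul (c : ℂ) {a : FMat} (ha : IsFin a) : IsFin (c • a) := by
  obtain ⟨n, hn⟩ := ha
  exact ⟨n, fun i j h => by show c * a i j = 0; rw [hn i j h, mul_zero]⟩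

lemma isFin_eUnit (i j : ℕ) : IsFin (eUnit i j) := by
  refine ⟨max i j + 1, fun k l h => ?_⟩
  simp only [eUnit, ite_eq_right_iff]
  rintro ⟨rfl, rfl⟩; omega

lemma isFin_fmul {a b : FMat} (ha : IsFin a) (hb : IsFin b) : IsFin (fmul a b) := by
  obtain ⟨n, hn⟩ := ha; obtain ⟨m, hm⟩ := hb
  refine ⟨max n m, fun i k h => ?_⟩
  show (∑' j, a i j * b j k) = 0
  rcases h with h | h
  · have : ∀ j, a i j * b j k = 0 := fun j => by
      rw [hn i j (Or.inl (by omega)), zero_mul]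
    simp [this]
  · have : ∀ j, a i j * b j k = 0 := fun j => by
      rw [hm j k (Or.inr (by omega)), mul_zero]
    simp [this]

/-! #### fstar lemmas -/

lemma fstar_add (a b : FMat) : fstar (a + b) = fstar a + fstar b := by
  funext i j; simp [fstar]

lemma fstar_smul (c : ℂ) (a : FMat) : fstar (c • a) = (starRingEnd ℂ c) • fstar a := by
  funext i j; simp [fstar]

lemma fstar_fstar (a : FMat) : fstar (fstar a) = a := by
  funext i j; simp [fstar]

lemma fstar_J (n : ℕ) : fstar (JMat n) = JMat n := by
  funext i j
  simp only [fstar, JMat]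
  split_ifs with h1 h2 h2 <;> simp_all <;> omega

lemma fstar_eUnit (i j : ℕ) : fstar (eUnit i j) = eUnit j i := by
  funext k l
  simp only [fstar, eUnit]
  split_ifs with h1 h2 h2 <;> simp_all [and_comm]

lemma fstar_zero : fstar (0 : FMat) = 0 := by funext i j; simp [fstar]

/-! #### fmul products -/

lemma fmul_apply (a b : FMat) (i k : ℕ) : fmul a b i k = ∑' j, a i j * b j k := rfl

lemma fmul_J_J' {n m : ℕ} (h : n ≤ m) : fmul (JMat m) (JMat n) = JMat n := by
  funext i k
  rw [fmul_apply, tsum_eq_single i ?_]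
  · simp only [JMat]
    split_ifs with h1 h2 h2 <;> simp_all <;> omega
  · intro j hj; simp only [JMat]
    rw [if_neg (by rintro ⟨rfl, _⟩; exact hj rfl), zero_mul]

lemma fmul_J_J'' {n m : ℕ} (h : n ≤ m) : fmul (JMat n) (JMat m) = JMat n := by
  funext i k
  rw [fmul_apply, tsum_eq_single i ?_]
  · simp only [JMat]
    split_ifs with h1 h2 h2 <;> simp_all <;> omega
  · intro j hj; simp only [JMat]
    rw [if_neg (by rintro ⟨rfl, _⟩; exact hj rfl), zero_mul]

lemma fmul_J_K (n : ℕ) : fmul (JMat n) (KMat n) = KMat n := by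
  funext i k
  rw [fmul_apply, tsum_eq_single i ?_]
  · simp only [JMat, KMat]
    split_ifs with h1 h2 h2 <;> simp_all <;> omega
  · intro j hj; simp only [JMat]
    rw [if_neg (by rintro ⟨rfl, _⟩; exact hj rfl), zero_mul]

lemma fmul_K_J (n : ℕ) : fmul (KMat n) (JMat n) = 0 := by
  funext i k
  rw [fmul_apply, Pi.zero_apply, Pi.zero_apply]
  convert tsum_zero with j
  simp only [KMat, JMat]
  split_ifs with h1 h2 <;> simp_all <;> omega

lemma fmul_J_Kstar (n : ℕ) : fmul (JMat n) (fstar (KMat n)) = 0 := by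
  funext i k
  rw [fmul_apply, Pi.zero_apply, Pi.zero_apply]
  convert tsum_zero with j
  simp only [JMat, KMat, fstar]
  split_ifs with h1 h2 <;> simp_all <;> omega

lemma fmul_Kstar_J (n : ℕ) : fmul (fstar (KMat n)) (JMat n) = fstar (KMat n) := by
  funext i k
  rw [fmul_apply, tsum_eq_single k ?_]
  · simp only [fstar, KMat, JMat]
    split_ifs with h1 h2 h2 <;> simp_all <;> omega
  · intro j hj; simp only [JMat]
    rw [if_neg (by rintro ⟨rfl, _⟩; exact hj rfl), mul_zero]

lemma fmul_K_Kstar (n : ℕ) : fmul (KMat n) (fstar (KMat n)) = JMat n := by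
  funext i k
  rw [fmul_apply, tsum_eq_single (i + n) ?_]
  · simp only [KMat, fstar, JMat]
    split_ifs with h1 h2 h2 <;> simp_all <;> omega
  · intro j hj; simp only [KMat]
    rw [if_neg (by rintro ⟨rfl, _⟩; exact hj rfl), zero_mul]

lemma fmul_J_eUnit {n i : ℕ} (h : i < n) : fmul (JMat n) (eUnit i 0) = eUnit i 0 := by
  funext a b
  rw [fmul_apply, tsum_eq_single a ?_]
  · simp only [JMat, eUnit]
    split_ifs with h1 h2 h2 <;> simp_all <;> omega
  · intro j hj; simp only [JMat]
    rw [if_neg (by rintro ⟨rfl, _⟩; exact hj rfl), zero_mul]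

lemma fmul_J_eUnit' {n i : ℕ} (h : n ≤ i) : fmul (JMat n) (eUnit i 0) = 0 := by
  funext a b
  rw [fmul_apply, Pi.zero_apply, Pi.zero_apply]
  convert tsum_zero with j
  simp only [JMat, eUnit]
  split_ifs with h1 h2 <;> simp_all <;> omega

lemma fmul_eUnit_J {n i : ℕ} (h : i < n) : fmul (eUnit 0 i) (JMat n) = eUnit 0 i := by
  funext a b
  rw [fmul_apply, tsum_eq_single b ?_]
  · simp only [JMat, eUnit]
    split_ifs with h1 h2 h2 <;> simp_all <;> omega
  · intro j hj; simp only [JMat]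
    rw [if_neg (by rintro ⟨rfl, _⟩; exact hj rfl), mul_zero]

lemma fmul_smul_right (a : FMat) (c : ℂ) (b : FMat) : fmul a (c • b) = c • fmul a b := by
  funext i k
  show (∑' j, a i j * (c * b j k)) = c * ∑' j, a i j * b j k
  rw [← tsum_mul_left]
  congr 1; funext j; ring


/-! #### Bimodule-level lemmas -/

section Bimod

variable {V : Type*} [AddCommGroup V] [Module ℂ V] (M : FBimod V)

lemma lsmul_zero_left (v : V) : M.lsmul 0 v = 0 := by
  have h := M.add_lsmul 0 0 v isFin_zero isFin_zero
  rw [add_zero] at h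
  exact (left_eq_add.mp h)

lemma rsmul_zero_right (v : V) : M.rsmul v 0 = 0 := by
  have h := M.rsmul_add' v 0 0 isFin_zero isFin_zero
  rw [add_zero] at h
  exact (left_eq_add.mp h)

lemma lsmul_zero_v (a : FMat) : M.lsmul a 0 = 0 := by
  have h := M.lsmul_add a 0 0
  rw [add_zero] at h
  exact (left_eq_add.mp h)

lemma rsmul_zero_v (a : FMat) : M.rsmul 0 a = 0 := by
  have h := M.rsmul_add 0 0 a
  rw [add_zero] at h
  exact (left_eq_add.mp h)

lemma star_zero' : M.star 0 = 0 := by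
  have h := M.star_add 0 0
  rw [add_zero] at h
  exact (left_eq_add.mp h)

lemma star_neg' (w : V) : M.star (-w) = -M.star w := by
  have h := M.star_add w (-w)
  rw [add_neg_cancel, star_zero'] at h
  exact eq_neg_of_add_eq_zero_right h.symm

lemma star_sub' (u w : V) : M.star (u - w) = M.star u - M.star w := by
  rw [sub_eq_add_neg, M.star_add, star_neg', sub_eq_add_neg]

lemma lsmul_sub (a : FMat) (u w : V) : M.lsmul a (u - w) = M.lsmul a u - M.lsmul a w := by
  have h := M.lsmul_add a (u - w) w
  rw [sub_add_cancel] at h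
  rw [eq_sub_iff_add_eq, ← h]

lemma rsmul_sub (u w : V) (a : FMat) : M.rsmul (u - w) a = M.rsmul u a - M.rsmul w a := by
  have h := M.rsmul_add (u - w) w a
  rw [sub_add_cancel] at h
  rw [eq_sub_iff_add_eq, ← h]

lemma red (P R S Q : FMat) (hP : IsFin P) (hR : IsFin R) (hS : IsFin S) (hQ : IsFin Q)
    (y : V) :
    M.lsmul P (M.rsmul (M.lsmul R (M.rsmul y S)) Q)
      = M.lsmul (fmul P R) (M.rsmul y (fmul S Q)) := by
  rw [M.lsmul_rsmul R (M.rsmul y S) Q hR hQ, ← M.rsmul_mul y S Q hS hQ,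
    ← M.mul_lsmul P R _ hP hR]

lemma cut_def (n : ℕ) (v : V) :
    M.cut n v = M.lsmul (JMat n) (M.rsmul v (JMat n)) := rfl

variable {M}

lemma lsmul_J_of_cut {n : ℕ} {w : V} (hw : M.cut n w = w) : M.lsmul (JMat n) w = w := by
  conv_lhs => rw [← hw, cut_def]
  rw [← M.mul_lsmul _ _ _ (isFin_J n) (isFin_J n), fmul_J_J' (le_refl n)]
  exact hw

lemma rsmul_J_of_cut {n : ℕ} {w : V} (hw : M.cut n w = w) : M.rsmul w (JMat n) = w := by
  conv_lhs => rw [← hw, cut_def]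
  rw [M.lsmul_rsmul _ _ _ (isFin_J n) (isFin_J n),
    ← M.rsmul_mul _ _ _ (isFin_J n) (isFin_J n), fmul_J_J' (le_refl n)]
  exact hw

lemma lsmul_smul_c {a : FMat} (ha : IsFin a) (c : ℂ) (w : V) :
    M.lsmul a (c • w) = c • M.lsmul a w := by
  obtain ⟨m, hm⟩ := M.nondeg w
  have hm' : M.cut m w = w := hm
  rw [← M.smul_compat c m w hm,
    ← M.mul_lsmul a _ w ha (isFin_smul c (isFin_J m)), fmul_smul_right,
    M.smul_lsmul c _ w (isFin_fmul ha (isFin_J m)),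
    M.mul_lsmul a (JMat m) w ha (isFin_J m), lsmul_J_of_cut hm']

lemma rsmul_smul_c (c : ℂ) (w : V) {a : FMat} (ha : IsFin a) :
    M.rsmul (c • w) a = c • M.rsmul w a := by
  obtain ⟨m, hm⟩ := M.nondeg w
  have hm' : M.cut m w = w := hm
  rw [← M.smul_compat c m w hm,
    M.lsmul_rsmul _ w a (isFin_smul c (isFin_J m)) ha,
    M.smul_lsmul c _ _ (isFin_J m),
    ← M.lsmul_rsmul _ w a (isFin_J m) ha, lsmul_J_of_cut hm']

lemma cut_star {m : ℕ} {w : V} (hm : M.cut m w = w) : M.cut m (M.star w) = M.star w := by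
  have h1 : M.star w = M.cut m (M.star w) := by
    conv_lhs => rw [← hm, cut_def]
    rw [M.star_lsmul _ _ (isFin_J m), M.star_rsmul _ _ (isFin_J m), fstar_J,
      M.lsmul_rsmul _ _ _ (isFin_J m) (isFin_J m), cut_def]
  exact h1.symm

lemma star_smul_c (c : ℂ) (w : V) : M.star (c • w) = (starRingEnd ℂ c) • M.star w := by
  obtain ⟨m, hm⟩ := M.nondeg w
  have hm' : M.cut m w = w := hm
  rw [← M.smul_compat c m w hm, M.star_lsmul _ _ (isFin_smul c (isFin_J m)),
    fstar_smul, fstar_J, M.smul_rsmul _ _ _ (isFin_J m),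
    rsmul_J_of_cut (cut_star hm')]

lemma star_smul_real (k : ℝ) (w : V) : M.star ((k : ℂ) • w) = (k : ℂ) • M.star w := by
  rw [star_smul_c, Complex.conj_ofReal]

lemma cut_add (n : ℕ) (u v : V) : M.cut n (u + v) = M.cut n u + M.cut n v := by
  rw [cut_def, M.rsmul_add, M.lsmul_add, cut_def, cut_def]

lemma cut_smul (n : ℕ) (c : ℂ) (w : V) : M.cut n (c • w) = c • M.cut n w := by
  rw [cut_def, rsmul_smul_c c w (isFin_J n), lsmul_smul_c (isFin_J n), cut_def]

lemma cut_zero (n : ℕ) : M.cut n (0 : V) = 0 := by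
  rw [cut_def, rsmul_zero_v, lsmul_zero_v]

lemma cut_sub (n : ℕ) (u v : V) : M.cut n (u - v) = M.cut n u - M.cut n v := by
  rw [cut_def, rsmul_sub, lsmul_sub, cut_def, cut_def]

lemma cut_mono {n : ℕ} {w : V} (hw : M.cut n w = w) {m : ℕ} (h : n ≤ m) :
    M.cut m w = w := by
  conv_lhs => rw [← hw, cut_def, cut_def]
  rw [red M _ _ _ _ (isFin_J m) (isFin_J n) (isFin_J n) (isFin_J m),
    fmul_J_J' h, fmul_J_J'' h]
  exact hw

lemma cut_ord (w : V) : M.cut (M.ord w) w = w := by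
  have hne : {n | M.cut n w = w}.Nonempty := M.nondeg w
  exact Nat.sInf_mem hne

lemma ord_le {n : ℕ} {w : V} (hw : M.cut n w = w) : M.ord w ≤ n := Nat.sInf_le hw

end Bimod



/-! #### Cone-level lemmas -/

section Cone

variable {V : Type*} [AddCommGroup V] [Module ℂ V] {M : FBimod V} {C : Set V} {e : V}
variable (h : M.IsLocalUnitBimod C e)

include h

lemma e_mem : e ∈ C := h.2.2.2.1

lemma zero_mem : (0 : V) ∈ C := by
  have h0 := h.1.2.2 e (e_mem h) 0 isFin_zero
  rwa [FBimod.conj, fstar_zero, rsmul_zero_right, lsmul_zero_v] at h0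

lemma add_mem {x y : V} (hx : x ∈ C) (hy : y ∈ C) : x + y ∈ C := h.1.2.1 x hx y hy

lemma star_of_mem {x : V} (hx : x ∈ C) : M.star x = x := h.1.1 x hx

lemma sum_mem {ι : Type*} {s : Finset ι} {f : ι → V} (hf : ∀ i ∈ s, f i ∈ C) :
    (∑ i ∈ s, f i) ∈ C := by
  classical
  induction s using Finset.cons_induction with
  | empty => simpa using zero_mem h
  | cons a s ha ih =>
    rw [Finset.sum_cons]
    exact add_mem h (hf a (Finset.mem_cons_self a s))
      (ih fun i hi => hf i (Finset.mem_cons_of_mem hi))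

lemma smul_mem {t : ℝ} (ht : 0 ≤ t) {x : V} (hx : x ∈ C) : ((t : ℂ)) • x ∈ C := by
  rcases eq_or_lt_of_le ht with rfl | htpos
  · simpa using zero_mem h
  · obtain ⟨m, hm⟩ := M.nondeg x
    have hm' : M.cut m x = x := hm
    have hc := h.1.2.2 x hx (((Real.sqrt t : ℝ) : ℂ) • JMat m)
      (isFin_smul _ (isFin_J m))
    have key : M.conj (((Real.sqrt t : ℝ) : ℂ) • JMat m) x = (t : ℂ) • x := by
      rw [FBimod.conj, fstar_smul, Complex.conj_ofReal, fstar_J,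
        M.smul_rsmul _ _ _ (isFin_J m), M.smul_lsmul _ _ _ (isFin_J m),
        lsmul_smul_c (isFin_J m), smul_smul, ← Complex.ofReal_mul,
        Real.mul_self_sqrt ht, ← cut_def, hm']
    rwa [key] at hc

/-! #### Lemmas about `epow` -/

lemma epow_term_mem (i : ℕ) : M.lsmul (eUnit i 0) (M.rsmul e (eUnit 0 i)) ∈ C := by
  have hc := h.1.2.2 e (e_mem h) (eUnit 0 i) (isFin_eUnit 0 i)
  rwa [FBimod.conj, fstar_eUnit] at hc

lemma epow_mem (n : ℕ) : M.epow e n ∈ C := by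
  rw [FBimod.epow]
  exact sum_mem h fun i _ => epow_term_mem h i

omit h

lemma cut_epow (M : FBimod V) (e : V) (n m : ℕ) :
    M.cut n (M.epow e m) = M.epow e (min n m) := by
  classical
  rw [FBimod.epow, FBimod.epow]
  have hhom : ∀ (s : Finset ℕ) (f : ℕ → V), M.cut n (∑ i ∈ s, f i) = ∑ i ∈ s, M.cut n (f i) := by
    intro s f
    exact map_sum (AddMonoidHom.mk' (M.cut n) (cut_add n)) f s
  rw [hhom]
  have hterm : ∀ i, M.cut n (M.lsmul (eUnit i 0) (M.rsmul e (eUnit 0 i)))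
      = if i < n then M.lsmul (eUnit i 0) (M.rsmul e (eUnit 0 i)) else 0 := by
    intro i
    rw [cut_def, red M _ _ _ _ (isFin_J n) (isFin_eUnit i 0) (isFin_eUnit 0 i) (isFin_J n)]
    by_cases hi : i < n
    · rw [if_pos hi, fmul_J_eUnit hi, fmul_eUnit_J hi]
    · rw [if_neg hi, fmul_J_eUnit' (le_of_not_gt hi), lsmul_zero_left]
  simp_rw [hterm]
  rw [← Finset.sum_filter]
  refine Finset.sum_congr ?_ fun _ _ => rfl
  ext a
  simp only [Finset.mem_filter, Finset.mem_range, Finset.mem_range]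
  omega

lemma star_epow (M : FBimod V) {C : Set V} {e : V} (h : M.IsLocalUnitBimod C e) (n : ℕ) :
    M.star (M.epow e n) = M.epow e n := by
  rw [FBimod.epow]
  have hs : M.star (∑ i ∈ Finset.range n, M.lsmul (eUnit i 0) (M.rsmul e (eUnit 0 i)))
      = ∑ i ∈ Finset.range n, M.star (M.lsmul (eUnit i 0) (M.rsmul e (eUnit 0 i))) :=
    map_sum (AddMonoidHom.mk' M.star M.star_add) _ _
  rw [hs]
  refine Finset.sum_congr rfl fun i _ => ?_
  rw [M.star_lsmul _ _ (isFin_eUnit i 0), M.star_rsmul _ _ (isFin_eUnit 0 i),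
    fstar_eUnit, fstar_eUnit, star_of_mem h (e_mem h),
    M.lsmul_rsmul _ _ _ (isFin_eUnit i 0) (isFin_eUnit 0 i)]

lemma epow_diff_mem {M : FBimod V} {C : Set V} {e : V} (h : M.IsLocalUnitBimod C e)
    {n m : ℕ} (hnm : n ≤ m) : M.epow e m - M.epow e n ∈ C := by
  classical
  have hsplit : M.epow e m = M.epow e n + ∑ i ∈ Finset.Ico n m,
      M.lsmul (eUnit i 0) (M.rsmul e (eUnit 0 i)) := by
    rw [FBimod.epow, FBimod.epow, Finset.range_eq_Ico,
      ← Finset.sum_Ico_consecutive _ (Nat.zero_le n) hnm, Finset.range_eq_Ico]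
  rw [hsplit, add_sub_cancel_left]
  exact sum_mem h fun i _ => epow_term_mem h i

end Cone


open Pointwise

section Block

variable {V : Type*} [AddCommGroup V] [Module ℂ V] {M : FBimod V} {C : Set V} {e : V}

lemma conj_B {n : ℕ} {z w : V} (hz : M.cut n z = z) (hw : M.cut n w = w)
    (hws : M.star w = w) (c : ℂ) :
    M.conj (JMat n + c • fstar (KMat n)) (M.pairPlus n z z + M.san n w)
      = (z + c • w) + (starRingEnd ℂ c) • (w + c • z) := by
  have hJ := isFin_J n
  have hK := isFin_K n
  have hK' := isFin_fstar hK
  have hzJ : M.rsmul z (JMat n) = z := rsmul_J_of_cut hz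
  have hwJ : M.rsmul w (JMat n) = w := rsmul_J_of_cut hw
  have hJz : M.lsmul (JMat n) z = z := lsmul_J_of_cut hz
  have hJw : M.lsmul (JMat n) w = w := lsmul_J_of_cut hw
  have hA2J : M.rsmul (M.lsmul (fstar (KMat n)) (M.rsmul z (KMat n))) (JMat n) = 0 := by
    rw [M.lsmul_rsmul _ _ _ hK' hJ, ← M.rsmul_mul _ _ _ (isFin_K n) hJ, fmul_K_J,
      rsmul_zero_right, lsmul_zero_v]
  have hA3J : M.rsmul (M.lsmul (JMat n) (M.rsmul w (KMat n))) (JMat n) = 0 := by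
    rw [M.lsmul_rsmul _ _ _ hJ hJ, ← M.rsmul_mul _ _ _ (isFin_K n) hJ, fmul_K_J,
      rsmul_zero_right, lsmul_zero_v]
  have hA4J : M.rsmul (M.lsmul (fstar (KMat n)) (M.rsmul w (JMat n))) (JMat n)
      = M.lsmul (fstar (KMat n)) (M.rsmul w (JMat n)) := by
    rw [M.lsmul_rsmul _ _ _ hK' hJ, ← M.rsmul_mul _ _ _ hJ hJ, fmul_J_J' (le_refl n)]
  have hzK' : M.rsmul z (fstar (KMat n)) = 0 := by
    conv_lhs => rw [← hzJ]
    rw [← M.rsmul_mul _ _ _ hJ hK', fmul_J_Kstar, rsmul_zero_right]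
  have hA2K' : M.rsmul (M.lsmul (fstar (KMat n)) (M.rsmul z (KMat n))) (fstar (KMat n))
      = M.lsmul (fstar (KMat n)) z := by
    rw [M.lsmul_rsmul _ _ _ hK' hK', ← M.rsmul_mul _ _ _ (isFin_K n) hK', fmul_K_Kstar, hzJ]
  have hA3K' : M.rsmul (M.lsmul (JMat n) (M.rsmul w (KMat n))) (fstar (KMat n)) = w := by
    rw [M.lsmul_rsmul _ _ _ hJ hK', ← M.rsmul_mul _ _ _ (isFin_K n) hK', fmul_K_Kstar,
      hwJ, hJw]
  have hA4K' : M.rsmul (M.lsmul (fstar (KMat n)) (M.rsmul w (JMat n))) (fstar (KMat n))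
      = 0 := by
    rw [M.lsmul_rsmul _ _ _ hK' hK', ← M.rsmul_mul _ _ _ hJ hK', fmul_J_Kstar,
      rsmul_zero_right, lsmul_zero_v]
  have hJK'z : M.lsmul (JMat n) (M.lsmul (fstar (KMat n)) z) = 0 := by
    rw [← M.mul_lsmul _ _ _ hJ hK', fmul_J_Kstar, lsmul_zero_left]
  have hKK'z : M.lsmul (KMat n) (M.lsmul (fstar (KMat n)) z) = z := by
    rw [← M.mul_lsmul _ _ _ (isFin_K n) hK', fmul_K_Kstar, hJz]
  have hKz : M.lsmul (KMat n) z = 0 := by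
    conv_lhs => rw [← hJz]
    rw [← M.mul_lsmul _ _ _ (isFin_K n) hJ, fmul_K_J, lsmul_zero_left]
  have hKw : M.lsmul (KMat n) w = 0 := by
    conv_lhs => rw [← hJw]
    rw [← M.mul_lsmul _ _ _ (isFin_K n) hJ, fmul_K_J, lsmul_zero_left]
  have hJA4 : M.lsmul (JMat n) (M.lsmul (fstar (KMat n)) (M.rsmul w (JMat n))) = 0 := by
    rw [← M.mul_lsmul _ _ _ hJ hK', fmul_J_Kstar, lsmul_zero_left]
  have hKA4 : M.lsmul (KMat n) (M.lsmul (fstar (KMat n)) (M.rsmul w (JMat n))) = w := by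
    rw [← M.mul_lsmul _ _ _ (isFin_K n) hK', fmul_K_Kstar, hwJ, hJw]
  rw [FBimod.conj, fstar_add, fstar_smul, fstar_J, fstar_fstar,
    FBimod.pairPlus, FBimod.san, hws,
    M.rsmul_add' _ _ _ hJ (isFin_smul c hK'), M.smul_rsmul c _ _ hK',
    M.rsmul_add, M.rsmul_add, M.rsmul_add, M.rsmul_add, M.rsmul_add, M.rsmul_add,
    hzJ, hA2J, hA3J, hA4J, hzK', hA2K', hA3K', hA4K',
    add_zero, zero_add, zero_add, add_zero,
    M.add_lsmul _ _ _ hJ (isFin_smul _ (isFin_K n)), M.smul_lsmul _ _ _ (isFin_K n)]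
  simp only [M.lsmul_add, lsmul_smul_c hJ, lsmul_smul_c (isFin_K n),
    hJz, hJw, hJA4, hKA4, hKz, hKw, hJK'z, hKK'z, add_zero, zero_add]

lemma conj_JcK {n : ℕ} {y : V} (hy : M.cut n y = y) (c : ℂ) :
    M.conj (JMat n + c • KMat n) y
      = (y + c • M.lsmul (JMat n) (M.rsmul y (KMat n)))
        + ((starRingEnd ℂ c) • M.lsmul (fstar (KMat n)) (M.rsmul y (JMat n))
           + ((starRingEnd ℂ c) * c) • M.lsmul (fstar (KMat n)) (M.rsmul y (KMat n))) := by
  have hJ := isFin_J n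
  have hK := isFin_K n
  have hK' := isFin_fstar hK
  rw [FBimod.conj, fstar_add, fstar_smul, fstar_J,
    M.rsmul_add' y _ _ hJ (isFin_smul c hK), M.smul_rsmul c y _ hK,
    M.add_lsmul _ _ _ hJ (isFin_smul _ hK'), M.smul_lsmul _ _ _ hK']
  simp only [M.lsmul_add, lsmul_smul_c hJ, lsmul_smul_c hK']
  rw [← cut_def, hy, smul_add, smul_smul]

lemma blockpos_iff (h : M.IsLocalUnitBimod C e) {n : ℕ} {z w : V}
    (hz : M.cut n z = z) (hw : M.cut n w = w)
    (hzs : M.star z = z) (hws : M.star w = w) :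
    M.pairPlus n z z + M.san n w ∈ C ↔ (z + w ∈ C ∧ z - w ∈ C) := by
  have hJ := isFin_J n
  have hK := isFin_K n
  have hK' := isFin_fstar hK
  constructor
  · intro hB
    constructor
    · have h2 := h.1.2.2 _ hB (JMat n + (1 : ℂ) • fstar (KMat n)) (isFin_add hJ (isFin_smul _ hK'))
      rw [conj_B hz hw hws 1] at h2
      simp only [one_smul, map_one] at h2
      have heq : z + w = ((1/2 : ℝ) : ℂ) • ((z + w) + (w + z)) := by
        push_cast
        module
      rw [heq]
      exact smul_mem h (by norm_num) h2
    · have h2 := h.1.2.2 _ hB (JMat n + (-1 : ℂ) • fstar (KMat n)) (isFin_add hJ (isFin_smul _ hK'))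
      rw [conj_B hz hw hws (-1)] at h2
      simp only [neg_smul, one_smul, map_neg, map_one] at h2
      have heq : z - w = ((1/2 : ℝ) : ℂ) • ((z + -w) + -(w + -z)) := by
        push_cast
        module
      rw [heq]
      exact smul_mem h (by norm_num) h2
  · rintro ⟨hp, hm⟩
    have hzw : M.cut n (z + w) = z + w := by rw [cut_add, hz, hw]
    have hzw' : M.cut n (z - w) = z - w := by rw [cut_sub, hz, hw]
    have hc1 := h.1.2.2 _ hp (JMat n + (1 : ℂ) • KMat n) (isFin_add hJ (isFin_smul _ hK))
    have hc2 := h.1.2.2 _ hm (JMat n + (-1 : ℂ) • KMat n) (isFin_add hJ (isFin_smul _ hK))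
    rw [conj_JcK hzw 1] at hc1
    rw [conj_JcK hzw' (-1)] at hc2
    simp only [one_smul, map_one, map_neg, neg_smul, one_mul, neg_neg, neg_mul] at hc1 hc2
    have hsum := add_mem h hc1 hc2
    have heq : M.pairPlus n z z + M.san n w
        = ((1/2 : ℝ) : ℂ) •
          ((z + w + M.lsmul (JMat n) (M.rsmul (z + w) (KMat n)) +
            (M.lsmul (fstar (KMat n)) (M.rsmul (z + w) (JMat n)) +
             M.lsmul (fstar (KMat n)) (M.rsmul (z + w) (KMat n)))) +
           (z - w + -M.lsmul (JMat n) (M.rsmul (z - w) (KMat n)) +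
            (-M.lsmul (fstar (KMat n)) (M.rsmul (z - w) (JMat n)) +
             M.lsmul (fstar (KMat n)) (M.rsmul (z - w) (KMat n))))) := by
      rw [FBimod.pairPlus, FBimod.san, hws]
      simp only [M.rsmul_add, rsmul_sub, M.lsmul_add, lsmul_sub]
      push_cast
      module
    rw [heq]
    exact smul_mem h (by norm_num) hsum

/-! #### The set defining the norm, via the order interval characterization -/

def Sset (M : FBimod V) (C : Set V) (e : V) (n : ℕ) (w : V) : Set ℝ :=
  {k : ℝ | 0 < k ∧ ((k : ℂ) • M.epow e n + w ∈ C ∧ (k : ℂ) • M.epow e n - w ∈ C)}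

lemma Sset_bddBelow (M : FBimod V) (C : Set V) (e : V) (n : ℕ) (w : V) :
    BddBelow (Sset M C e n w) := ⟨0, fun _ hx => hx.1.le⟩

lemma cut_mem (h : M.IsLocalUnitBimod C e) {x : V} (hx : x ∈ C) (n : ℕ) :
    M.cut n x ∈ C := by
  have hc := h.1.2.2 x hx (JMat n) (isFin_J n)
  rwa [FBimod.conj, fstar_J, ← cut_def] at hc

lemma Sset_eq (h : M.IsLocalUnitBimod C e) {n : ℕ} {w : V} (hw : M.cut n w = w)
    {m : ℕ} (hnm : n ≤ m) : Sset M C e m w = Sset M C e n w := by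
  ext t
  constructor
  · rintro ⟨ht, h1, h2⟩
    refine ⟨ht, ?_, ?_⟩
    · have e1 := cut_mem h h1 n
      rwa [cut_add n, cut_smul, cut_epow, min_eq_left hnm, hw] at e1
    · have e1 := cut_mem h h2 n
      rwa [cut_sub n, cut_smul, cut_epow, min_eq_left hnm, hw] at e1
  · rintro ⟨ht, h1, h2⟩
    have hd : ((t : ℝ) : ℂ) • (M.epow e m - M.epow e n) ∈ C :=
      smul_mem h ht.le (epow_diff_mem h hnm)
    refine ⟨ht, ?_, ?_⟩
    · have e1 := add_mem h h1 hd
      have heq : (t : ℂ) • M.epow e m + w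
          = ((t : ℂ) • M.epow e n + w) + (t : ℂ) • (M.epow e m - M.epow e n) := by
        module
      rwa [← heq] at e1
    · have e1 := add_mem h h2 hd
      have heq : (t : ℂ) • M.epow e m - w
          = ((t : ℂ) • M.epow e n - w) + (t : ℂ) • (M.epow e m - M.epow e n) := by
        module
      rwa [← heq] at e1

lemma lnorm_eq (h : M.IsLocalUnitBimod C e) {w : V} (hws : M.star w = w)
    {n : ℕ} (hw : M.cut n w = w) :
    M.lnorm C e w = sInf (Sset M C e n w) := by
  have hcw : M.cut (M.ord w) w = w := cut_ord w
  have h1 : M.ord w ≤ n := ord_le hw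
  have hset : {k : ℝ | 0 < k ∧
      M.pairPlus (M.ord w) ((k : ℂ) • M.epow e (M.ord w)) ((k : ℂ) • M.epow e (M.ord w)) +
        M.san (M.ord w) w ∈ C} = Sset M C e (M.ord w) w := by
    ext k
    simp only [Set.mem_setOf_eq, Sset]
    refine and_congr_right fun hk => ?_
    have hcz : M.cut (M.ord w) ((k : ℂ) • M.epow e (M.ord w)) = (k : ℂ) • M.epow e (M.ord w) := by
      rw [cut_smul, cut_epow, min_self]
    have hsz : M.star ((k : ℂ) • M.epow e (M.ord w)) = (k : ℂ) • M.epow e (M.ord w) := by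
      rw [star_smul_real, star_epow M h]
    exact blockpos_iff h hcz hcw hsz hws
  show sInf _ = _
  rw [hset, Sset_eq h hcw h1]

lemma Sset_upward (h : M.IsLocalUnitBimod C e) {n : ℕ} {w : V} {t t' : ℝ}
    (ht : t ∈ Sset M C e n w) (htt : t ≤ t') : t' ∈ Sset M C e n w := by
  obtain ⟨ht0, h1, h2⟩ := ht
  have hd : (((t' - t : ℝ)) : ℂ) • M.epow e n ∈ C :=
    smul_mem h (by linarith) (epow_mem h n)
  refine ⟨by linarith, ?_, ?_⟩
  · have e1 := add_mem h h1 hd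
    have heq : (t' : ℂ) • M.epow e n + w
        = ((t : ℂ) • M.epow e n + w) + ((t' - t : ℝ) : ℂ) • M.epow e n := by
      push_cast
      module
    rwa [← heq] at e1
  · have e1 := add_mem h h2 hd
    have heq : (t' : ℂ) • M.epow e n - w
        = ((t : ℂ) • M.epow e n - w) + ((t' - t : ℝ) : ℂ) • M.epow e n := by
      push_cast
      module
    rwa [← heq] at e1

lemma Sset_sInf_nonneg (h : M.IsLocalUnitBimod C e) {n : ℕ} {w : V}
    (hne : (Sset M C e n w).Nonempty) : 0 ≤ sInf (Sset M C e n w) :=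
  le_csInf hne fun x hx => hx.1.le

lemma sInf_mem_closure (h : M.IsLocalUnitBimod C e) {n : ℕ} {w : V}
    (hws : M.star w = w) (hne : (Sset M C e n w).Nonempty) :
    ((sInf (Sset M C e n w) : ℝ) : ℂ) • M.epow e n + w ∈ C ∧
      ((sInf (Sset M C e n w) : ℝ) : ℂ) • M.epow e n - w ∈ C := by
  set a := sInf (Sset M C e n w) with ha
  have hmem : ∀ k : ℝ, 0 < k → (a + k) ∈ Sset M C e n w := by
    intro k hk
    obtain ⟨s, hs, hsk⟩ := exists_lt_of_csInf_lt hne (by linarith : a < a + k)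
    exact Sset_upward h hs hsk.le
  constructor
  · refine h.2.2.1 (M.epow e n) (epow_mem h n) _ ?_ ?_
    · rw [M.star_add, star_smul_real, star_epow M h, hws]
    · intro k hk
      have e1 := (hmem k hk).2.1
      have heq : ((a + k : ℝ) : ℂ) • M.epow e n + w
          = (k : ℂ) • M.epow e n + ((a : ℂ) • M.epow e n + w) := by
        push_cast
        module
      rwa [heq] at e1
  · refine h.2.2.1 (M.epow e n) (epow_mem h n) _ ?_ ?_
    · rw [star_sub', star_smul_real, star_epow M h, hws]
    · intro k hk
      have e1 := (hmem k hk).2.2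
      have heq : ((a + k : ℝ) : ℂ) • M.epow e n - w
          = (k : ℂ) • M.epow e n + ((a : ℂ) • M.epow e n - w) := by
        push_cast
        module
      rwa [heq] at e1

lemma epow_zero (M : FBimod V) (e : V) : M.epow e 0 = 0 := by
  rw [FBimod.epow]; simp

lemma lnorm_zero (h : M.IsLocalUnitBimod C e) : M.lnorm C e (0 : V) = 0 := by
  rw [lnorm_eq h (star_zero' M) (cut_zero 0)]
  have hset : Sset M C e 0 (0 : V) = Set.Ioi 0 := by
    ext t
    simp [Sset, epow_zero, zero_mem h]
  rw [hset, csInf_Ioi]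

lemma smul_mem_iff (h : M.IsLocalUnitBimod C e) {c : ℝ} (hc : 0 < c) {x : V} :
    ((c : ℝ) : ℂ) • x ∈ C ↔ x ∈ C := by
  constructor
  · intro hx
    have e1 := smul_mem h (le_of_lt (show (0:ℝ) < c⁻¹ by positivity)) hx
    rwa [smul_smul, ← Complex.ofReal_mul, inv_mul_cancel₀ hc.ne', Complex.ofReal_one,
      one_smul] at e1
  · exact smul_mem h hc.le

lemma Sset_smul_mem (h : M.IsLocalUnitBimod C e) {n : ℕ} {w : V} {k s : ℝ}
    (hk : k ≠ 0) (hs : s ∈ Sset M C e n w) :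
    |k| * s ∈ Sset M C e n ((k : ℂ) • w) := by
  obtain ⟨hs0, h1, h2⟩ := hs
  have hk0 : 0 < |k| := abs_pos.mpr hk
  refine ⟨mul_pos hk0 hs0, ?_, ?_⟩
  · rcases lt_or_gt_of_ne hk with hkneg | hkpos
    · have e1 := smul_mem h (neg_nonneg.mpr hkneg.le) h2
      have heq : ((|k| * s : ℝ) : ℂ) • M.epow e n + (k : ℂ) • w
          = ((-k : ℝ) : ℂ) • ((s : ℂ) • M.epow e n - w) := by
        rw [abs_of_neg hkneg]; push_cast; module
      rwa [heq]
    · have e1 := smul_mem h hkpos.le h1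
      have heq : ((|k| * s : ℝ) : ℂ) • M.epow e n + (k : ℂ) • w
          = ((k : ℝ) : ℂ) • ((s : ℂ) • M.epow e n + w) := by
        rw [abs_of_pos hkpos]; push_cast; module
      rwa [heq]
  · rcases lt_or_gt_of_ne hk with hkneg | hkpos
    · have e1 := smul_mem h (neg_nonneg.mpr hkneg.le) h1
      have heq : ((|k| * s : ℝ) : ℂ) • M.epow e n - (k : ℂ) • w
          = ((-k : ℝ) : ℂ) • ((s : ℂ) • M.epow e n + w) := by
        rw [abs_of_neg hkneg]; push_cast; module
      rwa [heq]
    · have e1 := smul_mem h hkpos.le h2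
      have heq : ((|k| * s : ℝ) : ℂ) • M.epow e n - (k : ℂ) • w
          = ((k : ℝ) : ℂ) • ((s : ℂ) • M.epow e n - w) := by
        rw [abs_of_pos hkpos]; push_cast; module
      rwa [heq]

lemma Sset_smul (h : M.IsLocalUnitBimod C e) {n : ℕ} {w : V} {k : ℝ} (hk : k ≠ 0) :
    Sset M C e n ((k : ℂ) • w) = |k| • Sset M C e n w := by
  have hk0 : 0 < |k| := abs_pos.mpr hk
  ext t
  rw [Set.mem_smul_set]
  constructor
  · intro ht
    refine ⟨|k|⁻¹ * t, ?_, ?_⟩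
    · have e1 := Sset_smul_mem h (inv_ne_zero hk) ht
      rwa [abs_inv, smul_smul, ← Complex.ofReal_mul, inv_mul_cancel₀ hk,
        Complex.ofReal_one, one_smul] at e1
    · rw [smul_eq_mul, ← mul_assoc, mul_inv_cancel₀ hk0.ne', one_mul]
  · rintro ⟨s, hsmem, rfl⟩
    have e1 := Sset_smul_mem h hk hsmem
    rwa [smul_eq_mul]

lemma lnorm_smul (h : M.IsLocalUnitBimod C e) {w : V} (hws : M.star w = w) (k : ℝ) :
    M.lnorm C e ((k : ℂ) • w) = |k| * M.lnorm C e w := by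
  rcases eq_or_ne k 0 with rfl | hk
  · simp [lnorm_zero h]
  obtain ⟨n, hn⟩ := M.nondeg w
  have hn' : M.cut n w = w := hn
  have hkw : M.cut n ((k : ℂ) • w) = (k : ℂ) • w := by rw [cut_smul, hn']
  have hkws : M.star ((k : ℂ) • w) = (k : ℂ) • w := by rw [star_smul_real, hws]
  rw [lnorm_eq h hkws hkw, lnorm_eq h hws hn', Sset_smul h hk,
    Real.sInf_smul_of_nonneg (abs_nonneg k), smul_eq_mul]

lemma mem_Sset_of_cE_du (h : M.IsLocalUnitBimod C e) {n : ℕ} {u : V} (hu : u ∈ C)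
    (hsu : sInf (Sset M C e n u) = 1) {c d : ℝ} (hc : 0 < c) (hd : 0 < d)
    (hcd : (c : ℂ) • M.epow e n - (d : ℂ) • u ∈ C) : d ≤ c := by
  have hc' : c = d * (c / d) := by field_simp
  rw [hc'] at hcd
  have heq : ((d * (c / d) : ℝ) : ℂ) • M.epow e n - (d : ℂ) • u
      = ((d : ℝ) : ℂ) • (((c / d : ℝ) : ℂ) • M.epow e n - u) := by
    push_cast; module
  rw [heq, smul_mem_iff h hd] at hcd
  have hplus : ((c / d : ℝ) : ℂ) • M.epow e n + u ∈ C := by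
    have e1 := add_mem h hcd (smul_mem h (by norm_num : (0:ℝ) ≤ 2) hu)
    have heq2 : ((c / d : ℝ) : ℂ) • M.epow e n + u
        = (((c / d : ℝ) : ℂ) • M.epow e n - u) + ((2 : ℝ) : ℂ) • u := by
      push_cast; module
    rwa [heq2]
  have hmem : c / d ∈ Sset M C e n u := ⟨div_pos hc hd, hplus, hcd⟩
  have hle := csInf_le (Sset_bddBelow M C e n u) hmem
  rw [hsu] at hle
  exact (one_le_div hd).mp hle

lemma key_lower (h : M.IsLocalUnitBimod C e) {n : ℕ} {u v : V} (hu : u ∈ C) (hv : v ∈ C)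
    (hE : M.epow e n - (u + v) ∈ C) (hsu : sInf (Sset M C e n u) = 1)
    {t k₁ k₂ : ℝ} (ht : 0 < t) (hk₁ : 0 < k₁)
    (hA : (t : ℂ) • M.epow e n - ((k₁ : ℂ) • u + (k₂ : ℂ) • v) ∈ C) : k₁ ≤ t := by
  rcases le_or_gt 0 k₂ with hk2 | hk2
  · have e1 := add_mem h hA (smul_mem h hk2 hv)
    have heq : (t : ℂ) • M.epow e n - (k₁ : ℂ) • u
        = ((t : ℂ) • M.epow e n - ((k₁ : ℂ) • u + (k₂ : ℂ) • v)) + ((k₂ : ℝ) : ℂ) • v := by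
      push_cast; module
    rw [← heq] at e1
    exact mem_Sset_of_cE_du h hu hsu ht hk₁ e1
  · have e1 := add_mem h hA (smul_mem h (by linarith : (0:ℝ) ≤ -k₂) hE)
    have heq : ((t - k₂ : ℝ) : ℂ) • M.epow e n - ((k₁ - k₂ : ℝ) : ℂ) • u
        = ((t : ℂ) • M.epow e n - ((k₁ : ℂ) • u + (k₂ : ℂ) • v))
          + ((-k₂ : ℝ) : ℂ) • (M.epow e n - (u + v)) := by
      push_cast; module
    rw [← heq] at e1
    have hfin := mem_Sset_of_cE_du h hu hsu (by linarith : (0:ℝ) < t - k₂)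
      (by linarith : (0:ℝ) < k₁ - k₂) e1
    linarith

lemma key_lower_abs (h : M.IsLocalUnitBimod C e) {n : ℕ} {u v : V} (hu : u ∈ C) (hv : v ∈ C)
    (hE : M.epow e n - (u + v) ∈ C) (hsu : sInf (Sset M C e n u) = 1)
    {t k₁ k₂ : ℝ} (htS : t ∈ Sset M C e n ((k₁ : ℂ) • u + (k₂ : ℂ) • v)) : |k₁| ≤ t := by
  obtain ⟨ht, hplus, hminus⟩ := htS
  rcases lt_trichotomy k₁ 0 with hneg | rfl | hpos
  · rw [abs_of_neg hneg]
    refine key_lower h hu hv hE hsu (k₂ := -k₂) ht (by linarith : (0:ℝ) < -k₁) ?_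
    have heq : (t : ℂ) • M.epow e n - (((-k₁ : ℝ) : ℂ) • u + ((-k₂ : ℝ) : ℂ) • v)
        = (t : ℂ) • M.epow e n + ((k₁ : ℂ) • u + (k₂ : ℂ) • v) := by
      push_cast; module
    rwa [heq]
  · simpa using ht.le
  · rw [abs_of_pos hpos]
    exact key_lower h hu hv hE hsu ht hpos hminus

lemma key_upper (h : M.IsLocalUnitBimod C e) {n : ℕ} {u v : V} (hu : u ∈ C) (hv : v ∈ C)
    (hE : M.epow e n - (u + v) ∈ C) (k₁ k₂ : ℝ) {t : ℝ}
    (ht : max |k₁| |k₂| < t) : t ∈ Sset M C e n ((k₁ : ℂ) • u + (k₂ : ℂ) • v) := by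
  set m := max |k₁| |k₂| with hm
  have hm0 : 0 ≤ m := le_trans (abs_nonneg k₁) (le_max_left _ _)
  have ht0 : 0 < t := lt_of_le_of_lt hm0 ht
  have hmk1 : 0 ≤ m + k₁ := by
    have := neg_abs_le k₁
    have := le_max_left |k₁| |k₂|
    linarith
  have hmk2 : 0 ≤ m + k₂ := by
    have := neg_abs_le k₂
    have := le_max_right |k₁| |k₂|
    linarith
  have hmk1' : 0 ≤ m - k₁ := by
    have := le_abs_self k₁
    have := le_max_left |k₁| |k₂|
    linarith
  have hmk2' : 0 ≤ m - k₂ := by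
    have := le_abs_self k₂
    have := le_max_right |k₁| |k₂|
    linarith
  refine ⟨ht0, ?_, ?_⟩
  · have e1 := add_mem h (add_mem h (add_mem h
      (smul_mem h (by linarith : (0:ℝ) ≤ t - m) (epow_mem h n))
      (smul_mem h hm0 hE)) (smul_mem h hmk1 hu)) (smul_mem h hmk2 hv)
    have heq : (t : ℂ) • M.epow e n + ((k₁ : ℂ) • u + (k₂ : ℂ) • v)
        = (((t - m : ℝ) : ℂ) • M.epow e n + ((m : ℝ) : ℂ) • (M.epow e n - (u + v))
            + ((m + k₁ : ℝ) : ℂ) • u) + ((m + k₂ : ℝ) : ℂ) • v := by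
      push_cast; module
    rwa [heq]
  · have e1 := add_mem h (add_mem h (add_mem h
      (smul_mem h (by linarith : (0:ℝ) ≤ t - m) (epow_mem h n))
      (smul_mem h hm0 hE)) (smul_mem h hmk1' hu)) (smul_mem h hmk2' hv)
    have heq : (t : ℂ) • M.epow e n - ((k₁ : ℂ) • u + (k₂ : ℂ) • v)
        = (((t - m : ℝ) : ℂ) • M.epow e n + ((m : ℝ) : ℂ) • (M.epow e n - (u + v))
            + ((m - k₁ : ℝ) : ℂ) • u) + ((m - k₂ : ℝ) : ℂ) • v := by
      push_cast; module
    rwa [heq]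

end Block

end Stmt9Aux

open Stmt9Aux in
/-- In a local `𝔉`-order unit bimodule, for `𝔲, 𝔳 ∈ 𝔙⁺` with
`‖𝔲‖ = ‖𝔳‖ = 1`: `𝔲 ⊥_∞ 𝔳 ↔ ‖𝔲 + 𝔳‖ = 1`. -/
theorem statement9 {V : Type*} [AddCommGroup V] [Module ℂ V] (M : FBimod V) (C : Set V)
    (e : V) (h : M.IsLocalUnitBimod C e) (u v : V) (hu : u ∈ C) (hv : v ∈ C)
    (hnu : M.lnorm C e u = 1) (hnv : M.lnorm C e v = 1) :
    M.PerpInf C e u v ↔ M.lnorm C e (u + v) = 1 := by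
  obtain ⟨nu, hcu'⟩ := M.nondeg u
  obtain ⟨nv, hcv'⟩ := M.nondeg v
  set n := max nu nv with hn
  have hcu : M.cut n u = u := cut_mono hcu' (le_max_left _ _)
  have hcv : M.cut n v = v := cut_mono hcv' (le_max_right _ _)
  have hus : M.star u = u := star_of_mem h hu
  have hvs : M.star v = v := star_of_mem h hv
  constructor
  · intro hperp
    have h1 := hperp 1 1
    rw [Complex.ofReal_one, one_smul, one_smul, hnu, hnv, max_self] at h1
    exact h1
  · intro huv
    have hcuv : M.cut n (u + v) = u + v := by rw [cut_add, hcu, hcv]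
    have hsuv : M.star (u + v) = u + v := by rw [M.star_add, hus, hvs]
    have huv' : sInf (Sset M C e n (u + v)) = 1 := by
      rw [← lnorm_eq h hsuv hcuv]; exact huv
    have hne : (Sset M C e n (u + v)).Nonempty := by
      by_contra hemp
      rw [Set.not_nonempty_iff_eq_empty] at hemp
      rw [hemp, Real.sInf_empty] at huv'
      norm_num at huv'
    have hE : M.epow e n - (u + v) ∈ C := by
      have hc := (sInf_mem_closure h hsuv hne).2
      rwa [huv', Complex.ofReal_one, one_smul] at hc
    have hsu : sInf (Sset M C e n u) = 1 := by rw [← lnorm_eq h hus hcu]; exact hnu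
    have hsv : sInf (Sset M C e n v) = 1 := by rw [← lnorm_eq h hvs hcv]; exact hnv
    intro k₁ k₂
    have hw : M.cut n ((k₁ : ℂ) • u + (k₂ : ℂ) • v) = (k₁ : ℂ) • u + (k₂ : ℂ) • v := by
      rw [cut_add, cut_smul, cut_smul, hcu, hcv]
    have hwstar : M.star ((k₁ : ℂ) • u + (k₂ : ℂ) • v) = (k₁ : ℂ) • u + (k₂ : ℂ) • v := by
      rw [M.star_add, star_smul_real, star_smul_real, hus, hvs]
    rw [lnorm_eq h hwstar hw, lnorm_smul h hus k₁, lnorm_smul h hvs k₂, hnu, hnv,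
      mul_one, mul_one]
    set m := max |k₁| |k₂| with hm
    apply le_antisymm
    · by_contra hlt
      push_neg at hlt
      have hmem := key_upper h hu hv hE k₁ k₂
        (show m < (m + sInf (Sset M C e n ((k₁ : ℂ) • u + (k₂ : ℂ) • v))) / 2 by linarith)
      have hle := csInf_le (Sset_bddBelow M C e n _) hmem
      linarith
    · refine le_csInf ⟨m + 1, key_upper h hu hv hE k₁ k₂ (by linarith)⟩ fun t htS => ?_
      refine max_le ?_ ?_
      · exact key_lower_abs h hu hv hE hsu htS
      · have htS' : t ∈ Sset M C e n ((k₂ : ℂ) • v + (k₁ : ℂ) • u) := by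
          rwa [add_comm ((k₂ : ℂ) • v)]
        have hE' : M.epow e n - (v + u) ∈ C := by rwa [add_comm v u]
        exact key_lower_abs h hv hu hE' hsv htS'
end
end

section
/- Let V be an absolute matrix order unit space satisfying condition (T) and let p, q ∈ 𝒪𝒫_∞(V). Then p ≈ q if and only if p ⊕ e^m ∼ q ⊕ e^m for some m ∈ ℕ. -/
noncomputable section

open scoped Matrix.Norms.L2Operator

section Statement11Aux
set_option linter.unusedSectionVars false
set_option linter.unreachableTactic false
set_option linter.unusedTactic false

variable {V : Type*} [AddCommGroup V] [Module ℂ V] [StarAddMonoid V] [StarModule ℂ V]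

/-! #### Generic matrix-over-`V` helpers -/

lemma mstar_add' {m n : ℕ} (u v : Matrix (Fin m) (Fin n) V) :
    mstar (u + v) = mstar u + mstar v := by
  funext i j; simp [mstar, star_add]

lemma mstar_sub' {m n : ℕ} (u v : Matrix (Fin m) (Fin n) V) :
    mstar (u - v) = mstar u - mstar v := by
  funext i j; simp [mstar, star_sub]

lemma mstar_mstar' {m n : ℕ} (v : Matrix (Fin m) (Fin n) V) : mstar (mstar v) = v := by
  funext i j; simp [mstar]

lemma mstar_smul' {m n : ℕ} (c : ℂ) (v : Matrix (Fin m) (Fin n) V) :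
    mstar (c • v) = (starRingEnd ℂ c) • mstar v := by
  funext i j
  show star (c • v j i) = (starRingEnd ℂ c) • star (v j i)
  rw [star_smul]; rfl

lemma aSmul_one {m n : ℕ} (v : Matrix (Fin m) (Fin n) V) : aSmul 1 v = v := by
  funext i j
  simp [aSmul, Matrix.one_apply, ite_smul]

lemma smulB_one {m n : ℕ} (v : Matrix (Fin m) (Fin n) V) : smulB v 1 = v := by
  funext i j
  simp [smulB, Matrix.one_apply, ite_smul]

lemma aSmul_mul {r t m n : ℕ} (a : Matrix (Fin r) (Fin t) ℂ) (b : Matrix (Fin t) (Fin m) ℂ)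
    (v : Matrix (Fin m) (Fin n) V) : aSmul (a * b) v = aSmul a (aSmul b v) := by
  funext i j
  simp only [aSmul, Matrix.mul_apply, Finset.sum_smul, Finset.smul_sum, smul_smul]
  rw [Finset.sum_comm]

lemma aSmul_add {r m n : ℕ} (a : Matrix (Fin r) (Fin m) ℂ) (u v : Matrix (Fin m) (Fin n) V) :
    aSmul a (u + v) = aSmul a u + aSmul a v := by
  funext i j
  show (∑ k, a i k • (u k j + v k j)) = _
  simp [smul_add, Finset.sum_add_distrib]; rfl

lemma smulB_zero {m n s : ℕ} (b : Matrix (Fin n) (Fin s) ℂ) :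
    smulB (0 : Matrix (Fin m) (Fin n) V) b = 0 := by
  funext i j
  show (∑ k, b k j • (0 : Matrix (Fin m) (Fin n) V) i k) = 0
  simp [Matrix.zero_apply]

lemma mstar_aSmul {r m n : ℕ} (a : Matrix (Fin r) (Fin m) ℂ) (v : Matrix (Fin m) (Fin n) V) :
    mstar (aSmul a v) = smulB (mstar v) a.conjTranspose := by
  funext i j
  show star (∑ k, a j k • v k i) = ∑ k, (a.conjTranspose) k j • star (v k i)
  rw [star_sum]
  refine Finset.sum_congr rfl fun k _ => ?_
  rw [star_smul, Matrix.conjTranspose_apply]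

lemma smulB_smul_mat {m n s : ℕ} (v : Matrix (Fin m) (Fin n) V) (c : ℂ)
    (b : Matrix (Fin n) (Fin s) ℂ) : smulB v (c • b) = c • smulB v b := by
  funext i j
  show (∑ k, (c • b) k j • v i k) = c • ∑ k, b k j • v i k
  rw [Finset.smul_sum]
  refine Finset.sum_congr rfl fun k _ => ?_
  show (c * b k j) • v i k = c • b k j • v i k
  rw [mul_smul]

lemma aSmul_smul_mat {r m n : ℕ} (c : ℂ) (a : Matrix (Fin r) (Fin m) ℂ)
    (v : Matrix (Fin m) (Fin n) V) : aSmul (c • a) v = c • aSmul a v := by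
  funext i j
  show (∑ k, (c • a) i k • v k j) = c • ∑ k, a i k • v k j
  rw [Finset.smul_sum]
  refine Finset.sum_congr rfl fun k _ => ?_
  show (c * a i k) • v k j = c • a i k • v k j
  rw [mul_smul]

/-! #### `dsum` helpers -/

lemma dsum_add {m n r s : ℕ} (a c : Matrix (Fin m) (Fin n) V) (b d : Matrix (Fin r) (Fin s) V) :
    dsum a b + dsum c d = dsum (a + c) (b + d) := by
  funext i j
  show dsum a b i j + dsum c d i j = dsum (a+c) (b+d) i j
  unfold dsum
  split_ifs <;> simp <;> rfl

lemma dsum_sub {m n r s : ℕ} (a c : Matrix (Fin m) (Fin n) V) (b d : Matrix (Fin r) (Fin s) V) :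
    dsum a b - dsum c d = dsum (a - c) (b - d) := by
  funext i j
  show dsum a b i j - dsum c d i j = dsum (a-c) (b-d) i j
  unfold dsum
  split_ifs <;> simp <;> rfl

lemma dsum_smul {m n r s : ℕ} (c : ℂ) (a : Matrix (Fin m) (Fin n) V)
    (b : Matrix (Fin r) (Fin s) V) : c • dsum a b = dsum (c • a) (c • b) := by
  funext i j
  show c • dsum a b i j = dsum (c • a) (c • b) i j
  unfold dsum
  split_ifs <;> simp <;> rfl

lemma mstar_dsum {m n r s : ℕ} (a : Matrix (Fin m) (Fin n) V) (b : Matrix (Fin r) (Fin s) V) :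
    mstar (dsum a b) = dsum (mstar a) (mstar b) := by
  funext i j
  show star (dsum a b j i) = dsum (mstar a) (mstar b) i j
  unfold dsum
  split_ifs <;> simp [mstar] <;> omega

lemma dsum_inj {m r : ℕ} {a c : Matrix (Fin m) (Fin m) V} {b d : Matrix (Fin r) (Fin r) V}
    (h : dsum a b = dsum c d) : a = c ∧ b = d := by
  constructor
  · funext i j
    have h1 := congrFun (congrFun h ⟨i, by omega⟩) ⟨j, by omega⟩
    unfold dsum at h1
    rw [dif_pos i.isLt, dif_pos j.isLt, dif_pos i.isLt, dif_pos j.isLt] at h1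
    simpa using h1
  · funext i j
    have h1 := congrFun (congrFun h ⟨m + i, by omega⟩) ⟨m + j, by omega⟩
    unfold dsum at h1
    rw [dif_neg (by simp), dif_neg (by simp), dif_neg (by simp), dif_neg (by simp)] at h1
    simpa using h1

lemma dsum_empty_right {n : ℕ} (X : Matrix (Fin n) (Fin n) V)
    (Q : Matrix (Fin 0) (Fin 0) V) : dsum X Q = X := by
  funext i j
  unfold dsum
  rw [dif_pos (by have := i.isLt; omega : (i : ℕ) < n),
    dif_pos (by have := j.isLt; omega : (j : ℕ) < n)]
  rfl


/-! #### Basic positivity / absolute value lemmas -/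

namespace AMOUS

variable (A : AMOUS V)

lemma mstar_zero {m n : ℕ} : mstar (0 : Matrix (Fin m) (Fin n) V) = 0 := by
  funext i j; simp [mstar]

lemma abs_zero (n : ℕ) : A.abs n n 0 = 0 := by
  have h := A.abs_real_smul n 0 0 (mstar_zero)
  simpa using h

lemma pos_zero (n : ℕ) : (0 : Matrix (Fin n) (Fin n) V) ∈ A.pos n := by
  have := A.abs_mem n n 0
  rwa [abs_zero] at this

lemma abs_abs (m n : ℕ) (v : Matrix (Fin m) (Fin n) V) :
    A.abs n n (A.abs m n v) = A.abs m n v :=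
  A.abs_of_pos n _ (A.abs_mem m n v)

lemma smul_posR {n : ℕ} {k : ℝ} (hk : 0 ≤ k) {v : Matrix (Fin n) (Fin n) V}
    (hv : v ∈ A.pos n) : ((k : ℂ)) • v ∈ A.pos n := by
  set c : ℂ := ((Real.sqrt k : ℝ) : ℂ) with hc
  have h := A.pos_conj n n (c • (1 : Matrix (Fin n) (Fin n) ℂ)) v hv
  have hct : (c • (1 : Matrix (Fin n) (Fin n) ℂ)).conjTranspose
      = c • (1 : Matrix (Fin n) (Fin n) ℂ) := by
    rw [Matrix.conjTranspose_smul, Matrix.conjTranspose_one]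
    congr 1
    simp [hc]
  rw [hct, smulB_smul_mat, smulB_one, aSmul_smul_mat, aSmul_one, smul_smul] at h
  have : c * c = ((k : ℝ) : ℂ) := by
    rw [hc, ← Complex.ofReal_mul, Real.mul_self_sqrt hk]
  rwa [this] at h

lemma proper_n {n : ℕ} {v : Matrix (Fin n) (Fin n) V} (h1 : v ∈ A.pos n)
    (h2 : -v ∈ A.pos n) : v = 0 := by
  have hsa := A.pos_star n v h1
  have hneg : -v = (((-1 : ℝ) : ℂ)) • v := by push_cast; rw [neg_smul, one_smul]
  have habs : A.abs n n (-v) = v := by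
    rw [hneg, A.abs_real_smul n (-1) v hsa]
    simp [A.abs_of_pos n v h1]
  have hv2 : v = -v := by
    rw [← A.abs_of_pos n _ h2, habs]
  have hsum : v + v = 0 := by rw [eq_neg_iff_add_eq_zero] at hv2; exact hv2
  have h2v : (2 : ℂ) • v = 0 := by rw [two_smul]; exact hsum
  calc v = (2 : ℂ)⁻¹ • ((2 : ℂ) • v) := by rw [smul_smul]; norm_num
    _ = 0 := by rw [h2v, smul_zero]

lemma abs_neg' {n : ℕ} {v : Matrix (Fin n) (Fin n) V} (hsa : mstar v = v) :
    A.abs n n (-v) = A.abs n n v := by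
  have hneg : -v = (((-1 : ℝ) : ℂ)) • v := by push_cast; rw [neg_smul, one_smul]
  rw [hneg, A.abs_real_smul n (-1) v hsa]
  simp

lemma star_e : star A.e = A.e := by
  have h := A.pos_star 1 _ A.e_pos
  have := congrFun (congrFun h 0) 0
  simpa [mstar, diagE] using this

lemma mstar_eN (n : ℕ) : mstar (A.eN n) = A.eN n := by
  funext i j
  show star (A.eN n j i) = A.eN n i j
  unfold AMOUS.eN diagE
  by_cases h : (j : Fin n) = i
  · simp [h, eq_comm, star_e]
  · have h' : ¬ (i = j) := fun hh => h hh.symm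
    simp [h, h', star_zero]

lemma eN_dsum (m k : ℕ) : A.eN (m + k) = dsum (A.eN m) (A.eN k) := by
  funext i j
  unfold AMOUS.eN diagE dsum
  simp only [Matrix.of_apply, Fin.ext_iff]
  split_ifs <;> first | rfl | omega

lemma dsum_pos {m k : ℕ} {u : Matrix (Fin m) (Fin m) V} {v : Matrix (Fin k) (Fin k) V}
    (hu : u ∈ A.pos m) (hv : v ∈ A.pos k) : dsum u v ∈ A.pos (m + k) := by
  have h := A.abs_dsum m m k k u v
  rw [A.abs_of_pos m u hu, A.abs_of_pos k v hv] at h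
  have := A.abs_mem (m + k) (m + k) (dsum u v)
  rwa [h] at this

lemma eN_pos (n : ℕ) : A.eN n ∈ A.pos n := by
  induction n with
  | zero =>
    have h : A.eN 0 = A.abs 0 0 0 := by funext i j; exact i.elim0
    rw [h]; exact A.abs_mem 0 0 0
  | succ k ih =>
    have h : A.eN (k + 1) = dsum (A.eN k) (A.eN 1) := A.eN_dsum k 1
    rw [h]
    exact A.dsum_pos ih A.e_pos

lemma isOP_pos {n : ℕ} {P : Matrix (Fin n) (Fin n) V} (h : A.IsOP n P) : P ∈ A.pos n := by
  have hsa : mstar ((2 : ℂ) • P - A.eN n) = (2 : ℂ) • P - A.eN n := by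
    rw [mstar_sub', mstar_smul', h.1, A.mstar_eN,
      show ((starRingEnd ℂ) (2 : ℂ)) = (2 : ℂ) by rw [show (2:ℂ) = ((2:ℝ):ℂ) by norm_num, Complex.conj_ofReal]]
  have habs := (A.abs_add_self n _ hsa).1
  rw [h.2] at habs
  have h2 : A.eN n + ((2 : ℂ) • P - A.eN n) = (2 : ℂ) • P := by module
  rw [h2] at habs
  have h3 : P = (((1/2 : ℝ) : ℂ)) • ((2 : ℂ) • P) := by
    rw [smul_smul]; push_cast; norm_num
  rw [h3]
  exact A.smul_posR (by norm_num) habs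

lemma isOP_eN (n : ℕ) : A.IsOP n (A.eN n) := by
  refine ⟨A.mstar_eN n, ?_⟩
  have h : (2 : ℂ) • A.eN n - A.eN n = A.eN n := by module
  rw [h, A.abs_of_pos n _ (A.eN_pos n)]

lemma isOP_zero (n : ℕ) : A.IsOP n (0 : Matrix (Fin n) (Fin n) V) := by
  refine ⟨mstar_zero, ?_⟩
  have h : (2 : ℂ) • (0 : Matrix (Fin n) (Fin n) V) - A.eN n = -(A.eN n) := by module
  rw [h, A.abs_neg' (A.mstar_eN n), A.abs_of_pos n _ (A.eN_pos n)]

lemma isOP_dsum {m k : ℕ} {P : Matrix (Fin m) (Fin m) V} {Q : Matrix (Fin k) (Fin k) V}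
    (hP : A.IsOP m P) (hQ : A.IsOP k Q) : A.IsOP (m + k) (dsum P Q) := by
  constructor
  · rw [mstar_dsum, hP.1, hQ.1]
  · have h : (2 : ℂ) • dsum P Q - A.eN (m + k)
        = dsum ((2 : ℂ) • P - A.eN m) ((2 : ℂ) • Q - A.eN k) := by
      rw [A.eN_dsum m k, dsum_smul, dsum_sub]
    rw [h, A.abs_dsum, hP.2, hQ.2, ← A.eN_dsum m k]

/-! #### Orthogonality lemmas -/

lemma perp_symm {n : ℕ} {u v : Matrix (Fin n) (Fin n) V} (hu : u ∈ A.pos n)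
    (hv : v ∈ A.pos n) (h : A.Perp u v) : A.Perp v u := by
  have hsa : mstar (u - v) = u - v := by
    rw [mstar_sub', A.pos_star n u hu, A.pos_star n v hv]
  show A.abs n n (v - u) = v + u
  rw [show v - u = -(u - v) by abel, A.abs_neg' hsa, h, add_comm]

lemma perp_zero_right {n : ℕ} {u : Matrix (Fin n) (Fin n) V} (hu : u ∈ A.pos n) :
    A.Perp u 0 := by
  show A.abs n n (u - 0) = u + 0
  rw [sub_zero, add_zero, A.abs_of_pos n u hu]

lemma perp_zero_left {n : ℕ} {v : Matrix (Fin n) (Fin n) V} (hv : v ∈ A.pos n) :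
    A.Perp 0 v := by
  show A.abs n n (0 - v) = 0 + v
  rw [zero_sub, zero_add, A.abs_neg' (A.pos_star n v hv), A.abs_of_pos n v hv]

lemma perp_mono {n : ℕ} {u v w : Matrix (Fin n) (Fin n) V} (hu : u ∈ A.pos n)
    (hv : v ∈ A.pos n) (hw : w ∈ A.pos n) (h : A.Perp u v) (hvw : v - w ∈ A.pos n) :
    A.Perp u w :=
  A.absorb n u hu v hv w hw h hvw

lemma perp_add {n : ℕ} {u v w : Matrix (Fin n) (Fin n) V} (hu : u ∈ A.pos n)
    (hv : v ∈ A.pos n) (hw : w ∈ A.pos n) (h1 : A.Perp u v) (h2 : A.Perp u w) :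
    A.Perp u (v + w) := by
  have h := (A.ortho_pm n u hu v hv w hw h1 h2).1
  rwa [A.abs_of_pos n (v + w) (A.pos_add n v hv w hw)] at h

lemma perp_dsum {m k : ℕ} {a c : Matrix (Fin m) (Fin m) V} {b d : Matrix (Fin k) (Fin k) V}
    (h1 : A.Perp a c) (h2 : A.Perp b d) : A.Perp (dsum a b) (dsum c d) := by
  show A.abs _ _ (dsum a b - dsum c d) = dsum a b + dsum c d
  rw [dsum_sub, A.abs_dsum, h1, h2, dsum_add]

/-! #### Additivity of the absolute value on orthogonal self-adjoint elements -/

lemma abs_add_of_perp {n : ℕ} {a b : Matrix (Fin n) (Fin n) V} (ha : mstar a = a)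
    (hb : mstar b = b) (hab : A.Perp (A.abs n n a) (A.abs n n b)) :
    A.abs n n (a + b) = A.abs n n a + A.abs n n b := by
  have hc : (((1/2 : ℝ)) : ℂ) = (1/2 : ℂ) := by norm_num
  set ap := (((1/2 : ℝ)) : ℂ) • (A.abs n n a + a) with hap_def
  set am := (((1/2 : ℝ)) : ℂ) • (A.abs n n a - a) with ham_def
  set bp := (((1/2 : ℝ)) : ℂ) • (A.abs n n b + b) with hbp_def
  set bm := (((1/2 : ℝ)) : ℂ) • (A.abs n n b - b) with hbm_def
  have hapP : ap ∈ A.pos n := A.smul_posR (by norm_num) (A.abs_add_self n a ha).1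
  have hamP : am ∈ A.pos n := A.smul_posR (by norm_num) (A.abs_add_self n a ha).2
  have hbpP : bp ∈ A.pos n := A.smul_posR (by norm_num) (A.abs_add_self n b hb).1
  have hbmP : bm ∈ A.pos n := A.smul_posR (by norm_num) (A.abs_add_self n b hb).2
  have hsum_a : ap + am = A.abs n n a := by rw [hap_def, ham_def, hc]; module
  have hdiff_a : ap - am = a := by rw [hap_def, ham_def, hc]; module
  have hsum_b : bp + bm = A.abs n n b := by rw [hbp_def, hbm_def, hc]; module
  have hdiff_b : bp - bm = b := by rw [hbp_def, hbm_def, hc]; module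
  have habsaP := A.abs_mem n n a
  have habsbP := A.abs_mem n n b
  have hPa : A.Perp ap am := by
    show A.abs n n (ap - am) = ap + am
    rw [hdiff_a, hsum_a]
  have hPb : A.Perp bp bm := by
    show A.abs n n (bp - bm) = bp + bm
    rw [hdiff_b, hsum_b]
  -- |a| ⊥ bp, |a| ⊥ bm
  have h1 : A.Perp (A.abs n n a) bp :=
    A.perp_mono habsaP habsbP hbpP hab (by
      have : A.abs n n b - bp = bm := by rw [← hsum_b]; abel
      rw [this]; exact hbmP)
  have h2 : A.Perp (A.abs n n a) bm :=
    A.perp_mono habsaP habsbP hbmP hab (by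
      have : A.abs n n b - bm = bp := by rw [← hsum_b]; abel
      rw [this]; exact hbpP)
  -- push down to ap, am
  have h3 : A.Perp bp ap :=
    A.perp_mono hbpP habsaP hapP (A.perp_symm habsaP hbpP h1) (by
      have : A.abs n n a - ap = am := by rw [← hsum_a]; abel
      rw [this]; exact hamP)
  have h4 : A.Perp bp am :=
    A.perp_mono hbpP habsaP hamP (A.perp_symm habsaP hbpP h1) (by
      have : A.abs n n a - am = ap := by rw [← hsum_a]; abel
      rw [this]; exact hapP)
  have h5 : A.Perp bm ap :=
    A.perp_mono hbmP habsaP hapP (A.perp_symm habsaP hbmP h2) (by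
      have : A.abs n n a - ap = am := by rw [← hsum_a]; abel
      rw [this]; exact hamP)
  -- ap ⊥ (am + bm), bp ⊥ (am + bm)
  have hA : A.Perp ap (am + bm) :=
    A.perp_add hapP hamP hbmP hPa (A.perp_symm hbmP hapP h5)
  have hB : A.Perp bp (am + bm) :=
    A.perp_add hbpP hamP hbmP h4 hPb
  have hNP : (am + bm) ∈ A.pos n := A.pos_add n am hamP bm hbmP
  have hPP : (ap + bp) ∈ A.pos n := A.pos_add n ap hapP bp hbpP
  have hPN : A.Perp (ap + bp) (am + bm) :=
    A.perp_symm hNP hPP (A.perp_add hNP hapP hbpP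
      (A.perp_symm hapP hNP hA) (A.perp_symm hbpP hNP hB))
  have hdec : a + b = (ap + bp) - (am + bm) := by
    rw [← hdiff_a, ← hdiff_b]; abel
  calc A.abs n n (a + b) = A.abs n n ((ap + bp) - (am + bm)) := by rw [← hdec]
    _ = (ap + bp) + (am + bm) := hPN
    _ = A.abs n n a + A.abs n n b := by rw [← hsum_a, ← hsum_b]; abel

/-! #### The block swap -/

end AMOUS

/-- The `2m × 2m` scalar matrix swapping the two `m`-blocks. -/
def swapMat (m : ℕ) : Matrix (Fin (m + m)) (Fin (m + m)) ℂ :=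
  fun i j => if ((i : ℕ) = (j : ℕ) + m ∨ (j : ℕ) = (i : ℕ) + m) then 1 else 0

/-- The index swap. -/
def swapIdx (m : ℕ) (i : Fin (m + m)) : Fin (m + m) :=
  ⟨if (i : ℕ) < m then (i : ℕ) + m else (i : ℕ) - m,
    by have := i.isLt; split_ifs <;> omega⟩

lemma swapIdx_val (m : ℕ) (i : Fin (m + m)) :
    ((swapIdx m i : Fin (m + m)) : ℕ) = if (i : ℕ) < m then (i : ℕ) + m else (i : ℕ) - m :=
  rfl

lemma fin_val_mk {n a : ℕ} (h : a < n) : ((⟨a, h⟩ : Fin n) : ℕ) = a := rfl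

lemma fin_mk_eq {k a b : ℕ} {ha : a < k} {hb : b < k} (h : a = b) :
    (⟨a, ha⟩ : Fin k) = ⟨b, hb⟩ := by subst h; rfl

lemma swapIdx_swapIdx (m : ℕ) (i : Fin (m + m)) : swapIdx m (swapIdx m i) = i := by
  apply Fin.ext
  rw [swapIdx_val, swapIdx_val]
  have := i.isLt
  split_ifs <;> omega

lemma swapMat_self (m : ℕ) (i : Fin (m + m)) : swapMat m i (swapIdx m i) = 1 := by
  refine if_pos ?_
  rw [swapIdx_val]
  have := i.isLt
  split_ifs <;> omega

lemma swapMat_self' (m : ℕ) (j : Fin (m + m)) : swapMat m (swapIdx m j) j = 1 := by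
  refine if_pos ?_
  rw [swapIdx_val]
  have := j.isLt
  split_ifs <;> omega

lemma swapMat_ne (m : ℕ) (i b : Fin (m + m)) (hb : b ≠ swapIdx m i) : swapMat m i b = 0 := by
  refine if_neg fun hcond => hb (Fin.ext ?_)
  rw [swapIdx_val]
  have h1 := i.isLt
  have h2 := b.isLt
  rcases hcond with h | h <;> split_ifs <;> omega

lemma swapMat_ne' (m : ℕ) (j b : Fin (m + m)) (hb : b ≠ swapIdx m j) : swapMat m b j = 0 := by
  refine if_neg fun hcond => hb (Fin.ext ?_)
  rw [swapIdx_val]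
  have h1 := j.isLt
  have h2 := b.isLt
  rcases hcond with h | h <;> split_ifs <;> omega

lemma aSmul_swap_apply {V : Type*} [AddCommGroup V] [Module ℂ V] {m c : ℕ}
    (M : Matrix (Fin (m + m)) (Fin c) V) (i : Fin (m + m)) (j : Fin c) :
    aSmul (swapMat m) M i j = M (swapIdx m i) j := by
  show (∑ k, swapMat m i k • M k j) = _
  rw [Finset.sum_eq_single (swapIdx m i)]
  · rw [swapMat_self, one_smul]
  · intro b _ hb
    rw [swapMat_ne m i b hb, zero_smul]
  · intro h; exact absurd (Finset.mem_univ _) h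

lemma smulB_swap_apply {V : Type*} [AddCommGroup V] [Module ℂ V] {m r : ℕ}
    (M : Matrix (Fin r) (Fin (m + m)) V) (i : Fin r) (j : Fin (m + m)) :
    smulB M (swapMat m) i j = M i (swapIdx m j) := by
  show (∑ k, swapMat m k j • M i k) = _
  rw [Finset.sum_eq_single (swapIdx m j)]
  · rw [swapMat_self', one_smul]
  · intro b _ hb
    rw [swapMat_ne' m j b hb, zero_smul]
  · intro h; exact absurd (Finset.mem_univ _) h

lemma swapMat_conjTranspose (m : ℕ) : (swapMat m).conjTranspose = swapMat m := by
  funext i j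
  rw [Matrix.conjTranspose_apply]
  show star (if ((j : ℕ) = (i : ℕ) + m ∨ (i : ℕ) = (j : ℕ) + m) then (1 : ℂ) else 0)
    = if ((i : ℕ) = (j : ℕ) + m ∨ (j : ℕ) = (i : ℕ) + m) then (1 : ℂ) else 0
  by_cases h : ((i : ℕ) = (j : ℕ) + m ∨ (j : ℕ) = (i : ℕ) + m)
  · rw [if_pos h, if_pos (Or.symm h), star_one]
  · rw [if_neg h, if_neg (fun hc => h (Or.symm hc)), star_zero]

lemma swapMat_mul_self (m : ℕ) : swapMat m * swapMat m = 1 := by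
  funext i j
  rw [Matrix.mul_apply]
  rw [Finset.sum_eq_single (swapIdx m i)]
  · by_cases h : i = j
    · subst h
      rw [swapMat_self, one_mul, swapMat_self', Matrix.one_apply_eq]
    · rw [swapMat_ne m (swapIdx m i) j (by rw [swapIdx_swapIdx]; exact fun hh => h hh.symm),
        Matrix.one_apply_ne h, mul_zero]
  · intro b _ hb
    rw [swapMat_ne m i b hb, zero_mul]
  · intro h; exact absurd (Finset.mem_univ _) h

lemma cnorm_one_le (N : ℕ) : cnorm (1 : Matrix (Fin N) (Fin N) ℂ) ≤ 1 := by
  have h := Matrix.l2_opNorm_conjTranspose_mul_self (1 : Matrix (Fin N) (Fin N) ℂ)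
  rw [Matrix.conjTranspose_one, one_mul] at h
  show ‖(1 : Matrix (Fin N) (Fin N) ℂ)‖ ≤ 1
  nlinarith [norm_nonneg (1 : Matrix (Fin N) (Fin N) ℂ)]

lemma cnorm_swap_le (m : ℕ) : cnorm (swapMat m) ≤ 1 := by
  have h := Matrix.l2_opNorm_conjTranspose_mul_self (swapMat m)
  rw [swapMat_conjTranspose, swapMat_mul_self] at h
  have h1 : ‖(1 : Matrix (Fin (m + m)) (Fin (m + m)) ℂ)‖ ≤ 1 := cnorm_one_le (m + m)
  show ‖swapMat m‖ ≤ 1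
  nlinarith [norm_nonneg (swapMat m)]

namespace AMOUS

variable (A : AMOUS V)

/-! #### Unitary invariance of the absolute value under the block swap -/

lemma abs_aSmul_le {r m n : ℕ} (α : Matrix (Fin r) (Fin m) ℂ) (hα : cnorm α ≤ 1)
    (v : Matrix (Fin m) (Fin n) V) :
    A.abs m n v - A.abs r n (aSmul α v) ∈ A.pos n := by
  have h := A.abs_smul_le r m n n α v 1
  rw [smulB_one, smulB_one, A.abs_abs] at h
  have hα0 : (0 : ℝ) ≤ cnorm α := norm_nonneg _
  have h2 : (((1 - cnorm α : ℝ)) : ℂ) • A.abs m n v ∈ A.pos n :=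
    A.smul_posR (by linarith) (A.abs_mem m n v)
  have h3 : A.abs m n v - A.abs r n (aSmul α v)
      = ((cnorm α : ℝ) : ℂ) • A.abs m n v - A.abs r n (aSmul α v)
        + (((1 - cnorm α : ℝ)) : ℂ) • A.abs m n v := by
    push_cast
    module
  rw [h3]
  exact A.pos_add n _ h _ h2

lemma aSmul_swap_swap {m c : ℕ} (v : Matrix (Fin (m + m)) (Fin c) V) :
    aSmul (swapMat m) (aSmul (swapMat m) v) = v := by
  funext i j
  rw [aSmul_swap_apply, aSmul_swap_apply, swapIdx_swapIdx]

lemma abs_aSmul_swap {m c : ℕ} (v : Matrix (Fin (m + m)) (Fin c) V) :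
    A.abs (m + m) c (aSmul (swapMat m) v) = A.abs (m + m) c v := by
  have h1 := A.abs_aSmul_le (swapMat m) (cnorm_swap_le m) v
  have h2 := A.abs_aSmul_le (swapMat m) (cnorm_swap_le m) (aSmul (swapMat m) v)
  rw [aSmul_swap_swap] at h2
  have h3 : -(A.abs (m + m) c (aSmul (swapMat m) v) - A.abs (m + m) c v)
      = A.abs (m + m) c v - A.abs (m + m) c (aSmul (swapMat m) v) := by abel
  have := A.proper_n h2 (by rw [h3]; exact h1)
  rw [sub_eq_zero] at this
  exact this

lemma abs_smulB_swap_pos {m : ℕ} {X : Matrix (Fin (m + m)) (Fin (m + m)) V}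
    (hX : X ∈ A.pos (m + m)) :
    A.abs (m + m) (m + m) (smulB X (swapMat m))
      = aSmul (swapMat m) (smulB X (swapMat m)) := by
  set Y := aSmul (swapMat m) (smulB X (swapMat m)) with hY
  have hYpos : Y ∈ A.pos (m + m) := by
    have h := A.pos_conj (m + m) (m + m) (swapMat m) X hX
    rwa [swapMat_conjTranspose] at h
  have hXY : smulB X (swapMat m) = aSmul (swapMat m) Y := by
    rw [hY, aSmul_swap_swap]
  have h1 := A.abs_aSmul_le (swapMat m) (cnorm_swap_le m) (smulB X (swapMat m))
  rw [← hY, A.abs_of_pos _ Y hYpos] at h1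
  have h2 := A.abs_aSmul_le (swapMat m) (cnorm_swap_le m) Y
  rw [← hXY, A.abs_of_pos _ Y hYpos] at h2
  have h3 : -(Y - A.abs (m + m) (m + m) (smulB X (swapMat m)))
      = A.abs (m + m) (m + m) (smulB X (swapMat m)) - Y := by abel
  have h4 := A.proper_n h2 (by rw [h3]; exact h1)
  rw [sub_eq_zero] at h4
  exact h4.symm

/-! #### The hermitization trick and additivity of `abs` on orthogonal elements -/

lemma abs_H {m : ℕ} (x : Matrix (Fin m) (Fin m) V) :
    A.abs (m + m) (m + m) (aSmul (swapMat m) (dsum x (mstar x)))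
      = dsum (A.abs m m x) (A.abs m m (mstar x)) := by
  rw [A.abs_aSmul_swap, A.abs_dsum]

lemma H_selfadj {m : ℕ} (x : Matrix (Fin m) (Fin m) V) :
    mstar (aSmul (swapMat m) (dsum x (mstar x))) = aSmul (swapMat m) (dsum x (mstar x)) := by
  rw [mstar_aSmul, swapMat_conjTranspose, mstar_dsum, mstar_mstar']
  funext i j
  rw [smulB_swap_apply, aSmul_swap_apply]
  have hi := i.isLt
  have hj := j.isLt
  rcases Nat.lt_or_ge (i : ℕ) m with h1 | h1 <;> rcases Nat.lt_or_ge (j : ℕ) m with h2 | h2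
  · -- i < m, j < m : both sides 0
    have hsi : ((swapIdx m i : Fin (m + m)) : ℕ) = (i : ℕ) + m := by
      rw [swapIdx_val, if_pos h1]
    have hsj : ((swapIdx m j : Fin (m + m)) : ℕ) = (j : ℕ) + m := by
      rw [swapIdx_val, if_pos h2]
    unfold dsum
    rw [dif_pos h1, dif_neg (by omega : ¬ ((swapIdx m j : Fin (m + m)) : ℕ) < m),
      dif_neg (by omega : ¬ ((swapIdx m i : Fin (m + m)) : ℕ) < m), dif_pos h2]
  · -- i < m, j ≥ m
    have hsi : ((swapIdx m i : Fin (m + m)) : ℕ) = (i : ℕ) + m := by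
      rw [swapIdx_val, if_pos h1]
    have hsj : ((swapIdx m j : Fin (m + m)) : ℕ) = (j : ℕ) - m := by
      rw [swapIdx_val, if_neg (by omega)]
    unfold dsum
    rw [dif_pos h1, dif_pos (by omega : ((swapIdx m j : Fin (m + m)) : ℕ) < m),
      dif_neg (by omega : ¬ ((swapIdx m i : Fin (m + m)) : ℕ) < m), dif_neg (by omega : ¬ (j : ℕ) < m)]
    exact congrArg₂ _ (fin_mk_eq (by omega)) (fin_mk_eq (by omega))
  · -- i ≥ m, j < m
    have hsi : ((swapIdx m i : Fin (m + m)) : ℕ) = (i : ℕ) - m := by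
      rw [swapIdx_val, if_neg (by omega)]
    have hsj : ((swapIdx m j : Fin (m + m)) : ℕ) = (j : ℕ) + m := by
      rw [swapIdx_val, if_pos h2]
    unfold dsum
    rw [dif_neg (by omega : ¬ (i : ℕ) < m), dif_neg (by omega : ¬ ((swapIdx m j : Fin (m + m)) : ℕ) < m),
      dif_pos (by omega : ((swapIdx m i : Fin (m + m)) : ℕ) < m), dif_pos h2]
    exact congrArg₂ _ (fin_mk_eq (by omega)) (fin_mk_eq (by omega))
  · -- i ≥ m, j ≥ m : both sides 0
    have hsi : ((swapIdx m i : Fin (m + m)) : ℕ) = (i : ℕ) - m := by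
      rw [swapIdx_val, if_neg (by omega)]
    have hsj : ((swapIdx m j : Fin (m + m)) : ℕ) = (j : ℕ) - m := by
      rw [swapIdx_val, if_neg (by omega)]
    unfold dsum
    rw [dif_neg (by omega : ¬ (i : ℕ) < m), dif_pos (by omega : ((swapIdx m j : Fin (m + m)) : ℕ) < m),
      dif_pos (by omega : ((swapIdx m i : Fin (m + m)) : ℕ) < m), dif_neg (by omega : ¬ (j : ℕ) < m)]

lemma abs_add_of_perp_both {m : ℕ} {u w : Matrix (Fin m) (Fin m) V}
    (h1 : A.Perp (A.abs m m u) (A.abs m m w))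
    (h2 : A.Perp (A.abs m m (mstar u)) (A.abs m m (mstar w))) :
    A.abs m m (u + w) = A.abs m m u + A.abs m m w ∧
      A.abs m m (mstar (u + w)) = A.abs m m (mstar u) + A.abs m m (mstar w) := by
  have hH : aSmul (swapMat m) (dsum (u + w) (mstar (u + w)))
      = aSmul (swapMat m) (dsum u (mstar u)) + aSmul (swapMat m) (dsum w (mstar w)) := by
    rw [← aSmul_add, dsum_add, mstar_add']
  have hperp : A.Perp (A.abs (m + m) (m + m) (aSmul (swapMat m) (dsum u (mstar u))))
      (A.abs (m + m) (m + m) (aSmul (swapMat m) (dsum w (mstar w)))) := by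
    rw [A.abs_H, A.abs_H]
    exact A.perp_dsum h1 h2
  have key := A.abs_add_of_perp (H_selfadj u) (H_selfadj w) hperp
  rw [← hH, A.abs_H, A.abs_H, A.abs_H, dsum_add] at key
  exact dsum_inj key

/-! #### More order-projection helpers -/

lemma sa2 {n : ℕ} {R : Matrix (Fin n) (Fin n) V} (hR : A.IsOP n R) :
    mstar ((2 : ℂ) • R - A.eN n) = (2 : ℂ) • R - A.eN n := by
  rw [mstar_sub', mstar_smul', hR.1, A.mstar_eN,
    show ((starRingEnd ℂ) (2 : ℂ)) = (2 : ℂ) by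
      rw [show (2:ℂ) = ((2:ℝ):ℂ) by norm_num, Complex.conj_ofReal]]

lemma isOP_compl {n : ℕ} {R : Matrix (Fin n) (Fin n) V} (hR : A.IsOP n R) :
    A.IsOP n (A.eN n - R) := by
  constructor
  · rw [mstar_sub', A.mstar_eN, hR.1]
  · have h : (2 : ℂ) • (A.eN n - R) - A.eN n = -((2 : ℂ) • R - A.eN n) := by module
    rw [h, A.abs_neg' (A.sa2 hR), hR.2]

lemma perp_compl {n : ℕ} {R : Matrix (Fin n) (Fin n) V} (hR : A.IsOP n R) :
    A.Perp R (A.eN n - R) := by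
  show A.abs n n (R - (A.eN n - R)) = R + (A.eN n - R)
  have h1 : R - (A.eN n - R) = (2 : ℂ) • R - A.eN n := by module
  have h2 : R + (A.eN n - R) = A.eN n := by abel
  rw [h1, h2, hR.2]

lemma abs_empty {n : ℕ} (z : Matrix (Fin 0) (Fin n) V) : A.abs 0 n z = 0 := by
  have hz : aSmul (0 : Matrix (Fin 0) (Fin n) ℂ)
      (smulB (0 : Matrix (Fin n) (Fin n) V) (1 : Matrix (Fin n) (Fin n) ℂ)) = z := by
    funext i j; exact i.elim0
  have h := A.abs_smul_le 0 n n n 0 0 1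
  rw [hz, A.abs_zero, smulB_zero, A.abs_zero, smul_zero, zero_sub] at h
  exact A.proper_n (A.abs_mem 0 n z) h

lemma swap_conj_dsum {m : ℕ} (a b : Matrix (Fin m) (Fin m) V) :
    aSmul (swapMat m) (smulB (dsum a b) (swapMat m)) = dsum b a := by
  funext i j
  rw [aSmul_swap_apply, smulB_swap_apply]
  have hi := i.isLt
  have hj := j.isLt
  rcases Nat.lt_or_ge (i : ℕ) m with h1 | h1 <;> rcases Nat.lt_or_ge (j : ℕ) m with h2 | h2
  · have hsi : ((swapIdx m i : Fin (m + m)) : ℕ) = (i : ℕ) + m := by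
      rw [swapIdx_val, if_pos h1]
    have hsj : ((swapIdx m j : Fin (m + m)) : ℕ) = (j : ℕ) + m := by
      rw [swapIdx_val, if_pos h2]
    unfold dsum
    rw [dif_neg (by omega : ¬ ((swapIdx m i : Fin (m + m)) : ℕ) < m),
      dif_neg (by omega : ¬ ((swapIdx m j : Fin (m + m)) : ℕ) < m),
      dif_pos h1, dif_pos h2]
    exact congrArg₂ _ (fin_mk_eq (by omega)) (fin_mk_eq (by omega))
  · have hsi : ((swapIdx m i : Fin (m + m)) : ℕ) = (i : ℕ) + m := by
      rw [swapIdx_val, if_pos h1]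
    have hsj : ((swapIdx m j : Fin (m + m)) : ℕ) = (j : ℕ) - m := by
      rw [swapIdx_val, if_neg (by omega)]
    unfold dsum
    rw [dif_neg (by omega : ¬ ((swapIdx m i : Fin (m + m)) : ℕ) < m),
      dif_pos (by omega : ((swapIdx m j : Fin (m + m)) : ℕ) < m),
      dif_pos h1, dif_neg (by omega : ¬ (j : ℕ) < m)]
  · have hsi : ((swapIdx m i : Fin (m + m)) : ℕ) = (i : ℕ) - m := by
      rw [swapIdx_val, if_neg (by omega)]
    have hsj : ((swapIdx m j : Fin (m + m)) : ℕ) = (j : ℕ) + m := by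
      rw [swapIdx_val, if_pos h2]
    unfold dsum
    rw [dif_pos (by omega : ((swapIdx m i : Fin (m + m)) : ℕ) < m),
      dif_neg (by omega : ¬ ((swapIdx m j : Fin (m + m)) : ℕ) < m),
      dif_neg (by omega : ¬ (i : ℕ) < m), dif_pos h2]
  · have hsi : ((swapIdx m i : Fin (m + m)) : ℕ) = (i : ℕ) - m := by
      rw [swapIdx_val, if_neg (by omega)]
    have hsj : ((swapIdx m j : Fin (m + m)) : ℕ) = (j : ℕ) - m := by
      rw [swapIdx_val, if_neg (by omega)]
    unfold dsum
    rw [dif_pos (by omega : ((swapIdx m i : Fin (m + m)) : ℕ) < m),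
      dif_pos (by omega : ((swapIdx m j : Fin (m + m)) : ℕ) < m),
      dif_neg (by omega : ¬ (i : ℕ) < m), dif_neg (by omega : ¬ (j : ℕ) < m)]
    exact congrArg₂ _ (fin_mk_eq (by omega)) (fin_mk_eq (by omega))

/-! #### The similarity relation: basic properties -/

lemma sim_refl {p : OPE V} (hp : A.IsOPE p) : A.Sim p p := by
  have hst : mstar p.2 = p.2 := hp.1
  have habs : A.abs p.1 p.1 p.2 = p.2 := A.abs_of_pos _ _ (A.isOP_pos hp)
  have habs' : A.abs p.1 p.1 (mstar p.2) = p.2 := by rw [hst, habs]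
  refine ⟨p.2, ⟨?_, ?_⟩, habs'.symm, habs.symm⟩
  · rw [habs]; exact hp
  · rw [habs']; exact hp

lemma sim_symm {p q : OPE V} (h : A.Sim p q) : A.Sim q p := by
  obtain ⟨v, hPI, hp, hq⟩ := h
  refine ⟨mstar v, ⟨hPI.2, ?_⟩, ?_, hp⟩
  · rw [mstar_mstar']; exact hPI.1
  · rw [mstar_mstar']; exact hq

lemma sim_trans (hT : A.CondT) {a b c : OPE V} (h1 : A.Sim a b) (h2 : A.Sim b c) :
    A.Sim a c := by
  obtain ⟨u, hu, hau, hbu⟩ := h1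
  obtain ⟨v, hv, hcv, hbv⟩ := A.sim_symm h2
  have habs : A.abs a.1 b.1 u = A.abs c.1 b.1 v := by rw [← hbu, ← hbv]
  obtain ⟨w, hw, hw1, hw2⟩ := hT a.1 b.1 c.1 u v hu hv habs
  refine ⟨w, hw, ?_, ?_⟩
  · rw [hw1]; exact hau
  · rw [hw2]; exact hcv

lemma sim_dsum {a b c d : OPE V} (h1 : A.Sim a b) (h2 : A.Sim c d) :
    A.Sim (a.d c) (b.d d) := by
  obtain ⟨u, hu, ha, hb⟩ := h1
  obtain ⟨v, hv, hc, hd⟩ := h2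
  have e1 : A.abs (a.1 + c.1) (b.1 + d.1) (dsum u v)
      = dsum (A.abs a.1 b.1 u) (A.abs c.1 d.1 v) := A.abs_dsum _ _ _ _ u v
  have e2 : A.abs (b.1 + d.1) (a.1 + c.1) (mstar (dsum u v))
      = dsum (A.abs b.1 a.1 (mstar u)) (A.abs d.1 c.1 (mstar v)) := by
    rw [mstar_dsum]; exact A.abs_dsum _ _ _ _ (mstar u) (mstar v)
  refine ⟨dsum u v, ⟨?_, ?_⟩, ?_, ?_⟩
  · show A.IsOP (b.1 + d.1) (A.abs (a.1 + c.1) (b.1 + d.1) (dsum u v))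
    rw [e1]; exact A.isOP_dsum hu.1 hv.1
  · show A.IsOP (a.1 + c.1) (A.abs (b.1 + d.1) (a.1 + c.1) (mstar (dsum u v)))
    rw [e2]; exact A.isOP_dsum hu.2 hv.2
  · show dsum a.2 c.2 = A.abs (b.1 + d.1) (a.1 + c.1) (mstar (dsum u v))
    rw [e2, ← ha, ← hc]
  · show dsum b.2 d.2 = A.abs (a.1 + c.1) (b.1 + d.1) (dsum u v)
    rw [e1, ← hb, ← hd]

end AMOUS

lemma ope_mk_eq {V : Type*} [AddCommGroup V] {k k' : ℕ} (hk : k = k')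
    (M : Matrix (Fin k) (Fin k) V) (N : Matrix (Fin k') (Fin k') V)
    (hp : ∀ (i j : ℕ) (hi : i < k) (hj : j < k),
      M ⟨i, hi⟩ ⟨j, hj⟩ = N ⟨i, hk ▸ hi⟩ ⟨j, hk ▸ hj⟩) :
    (⟨k, M⟩ : OPE V) = ⟨k', N⟩ := by
  subst hk
  have : M = N := by
    funext i j
    have h := hp i j i.isLt j.isLt
    simpa using h
  rw [this]

lemma d_assoc {V : Type*} [AddCommGroup V] (x y z : OPE V) :
    (x.d y).d z = x.d (y.d z) := by
  obtain ⟨a, X⟩ := x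
  obtain ⟨b, Y⟩ := y
  obtain ⟨c, Z⟩ := z
  show (⟨a + b + c, dsum (dsum X Y) Z⟩ : OPE V) = ⟨a + (b + c), dsum X (dsum Y Z)⟩
  refine ope_mk_eq (Nat.add_assoc a b c) _ _ ?_
  intro i j hi hj
  unfold dsum
  simp only [fin_val_mk]
  split_ifs <;>
    first
      | rfl
      | omega
      | exact congrArg₂ _ (fin_mk_eq (by omega)) (fin_mk_eq (by omega))

namespace AMOUS

variable (A : AMOUS V)

/-! #### The splitting of the matrix order unit -/

lemma sim_eN_split (hT : A.CondT) (n : ℕ) {R : Matrix (Fin n) (Fin n) V}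
    (hR : A.IsOP n R) :
    A.Sim (A.eOPE n) ⟨n + n, dsum R (A.eN n - R)⟩ := by
  set R' := A.eN n - R with hR'def
  have hR'OP : A.IsOP n R' := A.isOP_compl hR
  have hRpos : R ∈ A.pos n := A.isOP_pos hR
  have hR'pos : R' ∈ A.pos n := A.isOP_pos hR'OP
  -- Step 1 : eⁿ ∼ eⁿ ⊕ 0
  have step1 : A.Sim (A.eOPE n) ⟨n + n, dsum (A.eN n) (0 : Matrix (Fin n) (Fin n) V)⟩ := by
    set z : Matrix (Fin 0) (Fin n) V := fun i _ => i.elim0 with hz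
    have e1 : A.abs (n + 0) (n + n) (dsum (A.eN n) z)
        = dsum (A.abs n n (A.eN n)) (A.abs 0 n z) := A.abs_dsum n n 0 n (A.eN n) z
    have e1' : A.abs (n + 0) (n + n) (dsum (A.eN n) z)
        = dsum (A.eN n) (0 : Matrix (Fin n) (Fin n) V) := by
      rw [e1, A.abs_of_pos n _ (A.eN_pos n), A.abs_empty]
    have e2 : A.abs (n + n) (n + 0) (mstar (dsum (A.eN n) z)) = A.eN n := by
      rw [mstar_dsum, A.abs_dsum n n n 0 (mstar (A.eN n)) (mstar z),
        A.mstar_eN, A.abs_of_pos n _ (A.eN_pos n)]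
      exact dsum_empty_right _ _
    refine ⟨dsum (A.eN n) z, ⟨?_, ?_⟩, e2.symm, e1'.symm⟩
    · show A.IsOP (n + n) (A.abs (n + 0) (n + n) (dsum (A.eN n) z))
      rw [e1']
      exact A.isOP_dsum (A.isOP_eN n) (A.isOP_zero n)
    · show A.IsOP (n + 0) (A.abs (n + n) (n + 0) (mstar (dsum (A.eN n) z)))
      rw [e2]
      exact A.isOP_eN n
  -- Step 2 : eⁿ ⊕ 0 ∼ R ⊕ R'
  have step2 : A.Sim ⟨n + n, dsum (A.eN n) (0 : Matrix (Fin n) (Fin n) V)⟩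
      ⟨n + n, dsum R R'⟩ := by
    set W₁ : Matrix (Fin (n + n)) (Fin (n + n)) V := dsum R 0 with hW₁
    set W₂ : Matrix (Fin (n + n)) (Fin (n + n)) V :=
      aSmul (swapMat n) (dsum (0 : Matrix (Fin n) (Fin n) V) R') with hW₂
    have habs1 : A.abs (n + n) (n + n) W₁ = dsum R 0 := by
      rw [hW₁, A.abs_dsum, A.abs_of_pos n R hRpos, A.abs_zero]
    have hst1 : mstar W₁ = W₁ := by
      rw [hW₁, mstar_dsum, hR.1, mstar_zero]
    have habs2 : A.abs (n + n) (n + n) W₂ = dsum 0 R' := by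
      rw [hW₂, A.abs_aSmul_swap, A.abs_dsum, A.abs_zero, A.abs_of_pos n R' hR'pos]
    have hst2 : mstar W₂ = smulB (dsum (0 : Matrix (Fin n) (Fin n) V) R') (swapMat n) := by
      rw [hW₂, mstar_aSmul, swapMat_conjTranspose, mstar_dsum, mstar_zero, hR'OP.1]
    have habs2' : A.abs (n + n) (n + n) (mstar W₂) = dsum R' 0 := by
      rw [hst2, A.abs_smulB_swap_pos (A.dsum_pos (A.pos_zero n) hR'pos), swap_conj_dsum]
    have hperp1 : A.Perp (A.abs (n + n) (n + n) W₁) (A.abs (n + n) (n + n) W₂) := by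
      rw [habs1, habs2]
      exact A.perp_dsum (A.perp_zero_right hRpos) (A.perp_zero_left hR'pos)
    have hperp2 : A.Perp (A.abs (n + n) (n + n) (mstar W₁))
        (A.abs (n + n) (n + n) (mstar W₂)) := by
      rw [hst1, habs1, habs2']
      exact A.perp_dsum (A.perp_compl hR) (A.perp_zero_right (A.pos_zero n))
    obtain ⟨key1, key2⟩ := A.abs_add_of_perp_both hperp1 hperp2
    have habsW : A.abs (n + n) (n + n) (W₁ + W₂) = dsum R R' := by
      rw [key1, habs1, habs2, dsum_add, add_zero, zero_add]
    have habsW' : A.abs (n + n) (n + n) (mstar (W₁ + W₂))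
        = dsum (A.eN n) (0 : Matrix (Fin n) (Fin n) V) := by
      rw [key2, hst1, habs1, habs2', dsum_add, add_zero,
        show R + R' = A.eN n by rw [hR'def]; abel]
    refine ⟨W₁ + W₂, ⟨?_, ?_⟩, habsW'.symm, habsW.symm⟩
    · rw [habsW]
      exact A.isOP_dsum hR hR'OP
    · rw [habsW']
      exact A.isOP_dsum (A.isOP_eN n) (A.isOP_zero n)
  exact A.sim_trans hT step1 step2

end AMOUS

end Statement11Aux

/-- In an absolute matrix order unit space satisfying (T):
`p ≈ q` iff `p ⊕ eᵐ ∼ q ⊕ eᵐ` for some `m ∈ ℕ`. -/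
theorem statement11 {V : Type*} [AddCommGroup V] [Module ℂ V] [StarAddMonoid V] [StarModule ℂ V] (A : AMOUS V) (habs : A.IsAbsolute) (hT : A.CondT)
    (p q : OPE V) (hp : A.IsOPE p) (hq : A.IsOPE q) :
    A.ASim p q ↔ ∃ m : ℕ, A.Sim (p.d (A.eOPE m)) (q.d (A.eOPE m)) := by
  constructor
  · rintro ⟨r, hr, hsim⟩
    obtain ⟨n, R⟩ := r
    refine ⟨n, ?_⟩
    have hL := A.sim_eN_split hT n hr
    have h1 : A.Sim (p.d (A.eOPE n)) (p.d ⟨n + n, dsum R (A.eN n - R)⟩) :=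
      A.sim_dsum (A.sim_refl hp) hL
    have h2 : A.Sim (q.d (A.eOPE n)) (q.d ⟨n + n, dsum R (A.eN n - R)⟩) :=
      A.sim_dsum (A.sim_refl hq) hL
    have e1 : p.d ⟨n + n, dsum R (A.eN n - R)⟩ = (p.d ⟨n, R⟩).d ⟨n, A.eN n - R⟩ :=
      (d_assoc p ⟨n, R⟩ ⟨n, A.eN n - R⟩).symm
    have e2 : q.d ⟨n + n, dsum R (A.eN n - R)⟩ = (q.d ⟨n, R⟩).d ⟨n, A.eN n - R⟩ :=
      (d_assoc q ⟨n, R⟩ ⟨n, A.eN n - R⟩).symm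
    rw [e1] at h1
    rw [e2] at h2
    have h3 : A.Sim ((p.d ⟨n, R⟩).d ⟨n, A.eN n - R⟩) ((q.d ⟨n, R⟩).d ⟨n, A.eN n - R⟩) :=
      A.sim_dsum hsim (A.sim_refl (A.isOP_compl hr))
    exact A.sim_trans hT (A.sim_trans hT h1 h3) (A.sim_symm h2)
  · rintro ⟨m, h⟩
    exact ⟨A.eOPE m, A.isOP_eN m, h⟩
end
end
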